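/- arXiv:1101.0992 — 6 statements merged into one kernel-verified Lean document; each statement's English description precedes it below -/
import Mathlib

section
/- Let h : [X, ∞) → ℝ be a positive C² function with h(r) → 0 and h'(r) → 0 as r → ∞, satisfying the differential inequality h''(r) + (N-2)/r · h'(r) ≥ (1-η)·h(r) for all r > X, where 0 < η < 1, N ≥ 2, and X > 0. Then h'(r) + √(1-η)·h(r) ≤ 0 for all r > X; in particular there is a constant C > 0 such that h(r) ≤ C·exp(-√(1-η)·r) for all r ≥ X. -/
open Real Filter

theorem stmt1 (N : ℕ) (hN : 2 ≤ N) (η X : ℝ) (hη : 0 < η ∧ η < 1) (hX : 0 < X)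
    (h : ℝ → ℝ) (hC2 : ContDiff ℝ 2 h) (hpos : ∀ r, X ≤ r → 0 < h r)
    (hlim : Tendsto h atTop (nhds 0)) (hlim' : Tendsto (deriv h) atTop (nhds 0))
    (hineq : ∀ r, X < r →
      deriv (deriv h) r + ((N : ℝ) - 2) / r * deriv h r ≥ (1 - η) * h r) :
    (∀ r, X < r → deriv h r + Real.sqrt (1 - η) * h r ≤ 0) ∧
    ∃ C > 0, ∀ r, X ≤ r → h r ≤ C * Real.exp (-Real.sqrt (1 - η) * r) := by
  obtain ⟨hη0, hη1⟩ := hη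
  have h1η : (0:ℝ) < 1 - η := by linarith
  set c := Real.sqrt (1 - η) with hc_def
  have hc2 : c ^ 2 = 1 - η := Real.sq_sqrt h1η.le
  have hc : 0 < c := Real.sqrt_pos.mpr h1η
  have hd1 : Differentiable ℝ h := hC2.differentiable (by norm_num)
  have hd2 : Differentiable ℝ (deriv h) := by
    have h2 : ContDiff ℝ ((1:ℕ)+1) h := by exact_mod_cast hC2
    exact ((contDiff_succ_iff_deriv.mp h2).2.2).differentiable (by norm_num)
  have hNnn : (0:ℝ) ≤ (N:ℝ) - 2 := by
    have : (2:ℝ) ≤ (N:ℝ) := by exact_mod_cast hN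
    linarith
  -- Step 1: deriv h < 0 on (X, ∞)
  have hderiv_neg : ∀ r, X < r → deriv h r < 0 := by
    by_contra hcon
    push_neg at hcon
    obtain ⟨r₀, hr₀X, hr₀⟩ := hcon
    set n := N - 2 with hn
    have hnc : ((n:ℝ)) = (N:ℝ) - 2 := by
      rw [hn]
      push_cast [Nat.cast_sub hN]
      ring
    set u := fun r : ℝ => r ^ n * deriv h r with hu_def
    have hu : ∀ r : ℝ, HasDerivAt u
        ((n:ℝ) * r ^ (n-1) * deriv h r + r ^ n * deriv (deriv h) r) r := by
      intro r
      exact (hasDerivAt_pow n r).mul (hd2 r).hasDerivAt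
    have key : ∀ r, X < r →
        0 < (n:ℝ) * r ^ (n-1) * deriv h r + r ^ n * deriv (deriv h) r := by
      intro r hr
      have hr0 : 0 < r := hX.trans hr
      have hi := hineq r hr
      have hrn : 0 < r ^ n := pow_pos hr0 n
      have hid : (n:ℝ) * r ^ (n-1) = ((N:ℝ)-2)/r * r ^ n := by
        rcases Nat.lt_or_ge N 3 with h3 | h3
        · have hN2 : N = 2 := by omega
          subst hN2
          simp [hn]
        · have hn1 : 1 ≤ n := by omega
          have hrw : r ^ n = r ^ (n-1) * r := by
            rw [← pow_succ]
            congr 1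
            omega
          rw [hrw, ← hnc]
          field_simp
      have hh : 0 < h r := hpos r hr.le
      have h2 : r ^ n * ((1-η) * h r) ≤
          r ^ n * (deriv (deriv h) r + ((N:ℝ)-2)/r * deriv h r) :=
        mul_le_mul_of_nonneg_left hi hrn.le
      have h3 : 0 < r ^ n * ((1-η) * h r) := by positivity
      calc (0:ℝ) < r ^ n * ((1-η) * h r) := h3
        _ ≤ r ^ n * (deriv (deriv h) r + ((N:ℝ)-2)/r * deriv h r) := h2
        _ = (n:ℝ) * r ^ (n-1) * deriv h r + r ^ n * deriv (deriv h) r := by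
            rw [hid]; ring
    have husm : StrictMonoOn u (Set.Ici r₀) := by
      apply strictMonoOn_of_deriv_pos (convex_Ici r₀)
      · exact ((continuous_pow n).mul hd2.continuous).continuousOn
      · rw [interior_Ici]
        intro r hr
        rw [(hu r).deriv]
        exact key r (hr₀X.trans hr)
    have hpos' : ∀ r, r₀ < r → 0 < deriv h r := by
      intro r hr
      have hur : u r₀ < u r :=
        husm Set.self_mem_Ici (Set.mem_Ici.mpr hr.le) hr
      have hu0 : 0 ≤ u r₀ := by
        have : 0 < r₀ := hX.trans hr₀X
        exact mul_nonneg (pow_nonneg this.le n) hr₀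
      have hurpos : 0 < u r := lt_of_le_of_lt hu0 hur
      by_contra hcon2
      push_neg at hcon2
      have : u r ≤ 0 := by
        have hr0 : (0:ℝ) < r := hX.trans (hr₀X.trans hr)
        exact mul_nonpos_of_nonneg_of_nonpos (pow_nonneg hr0.le n) hcon2
      linarith
    have hsm : StrictMonoOn h (Set.Ici r₀) := by
      apply strictMonoOn_of_deriv_pos (convex_Ici r₀) hd1.continuous.continuousOn
      rw [interior_Ici]
      exact fun r hr => hpos' r hr
    have hle : h (r₀ + 1) ≤ 0 := by
      apply ge_of_tendsto hlim
      filter_upwards [eventually_ge_atTop (r₀ + 1)] with s hs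
      rcases eq_or_lt_of_le hs with rfl | hlt
      · exact le_refl _
      · exact (hsm (Set.mem_Ici.mpr (by linarith)) (Set.mem_Ici.mpr (by linarith)) hlt).le
    exact absurd (hpos (r₀+1) (by linarith)) (not_lt.mpr hle)
  -- Step 2: energy E = h'^2 - c^2 h^2 is nonincreasing on [X,∞) and → 0
  set E := fun r : ℝ => (deriv h r) ^ 2 - c ^ 2 * (h r) ^ 2 with hE_def
  have hEd : ∀ r : ℝ, HasDerivAt E
      (2 * deriv h r * deriv (deriv h) r - c ^ 2 * (2 * h r * deriv h r)) r := by
    intro r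
    have h1 := ((hd2 r).hasDerivAt.pow 2)
    have h2 := (((hd1 r).hasDerivAt.pow 2).const_mul (c ^ 2))
    have h3 := h1.sub h2
    refine HasDerivAt.congr_deriv h3 ?_
    push_cast
    ring
  have hEanti : AntitoneOn E (Set.Ici X) := by
    apply antitoneOn_of_deriv_nonpos (convex_Ici X)
    · exact (((hd2.continuous).pow 2).sub
        (continuous_const.mul ((hd1.continuous).pow 2))).continuousOn
    · rw [interior_Ici]
      exact fun r _ => (hEd r).differentiableAt.differentiableWithinAt
    · rw [interior_Ici]
      intro r hr
      rw [(hEd r).deriv, hc2]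
      have hd := hderiv_neg r hr
      have hi := hineq r hr
      have hh := hpos r hr.le
      have hk : 0 ≤ ((N:ℝ)-2)/r := div_nonneg hNnn (hX.trans hr).le
      nlinarith [mul_nonneg hk (sq_nonneg (deriv h r)),
        mul_nonneg (neg_nonneg.mpr hd.le)
          (by linarith : (0:ℝ) ≤ deriv (deriv h) r + ((N:ℝ)-2)/r * deriv h r - (1-η) * h r)]
  have hEt : Tendsto E atTop (nhds 0) := by
    have ht : Tendsto (fun r => (deriv h r) ^ 2 - c ^ 2 * (h r) ^ 2) atTop
        (nhds ((0:ℝ) ^ 2 - c ^ 2 * (0:ℝ) ^ 2)) :=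
      (hlim'.pow 2).sub ((hlim.pow 2).const_mul (c ^ 2))
    simpa [hE_def] using ht
  have hEnn : ∀ r, X ≤ r → 0 ≤ E r := by
    intro r hr
    apply le_of_tendsto hEt
    filter_upwards [eventually_ge_atTop r] with s hs
    exact hEanti (Set.mem_Ici.mpr hr) (Set.mem_Ici.mpr (hr.trans hs)) hs
  -- Part 1
  have part1 : ∀ r, X < r → deriv h r + c * h r ≤ 0 := by
    intro r hr
    have hE0 := hEnn r hr.le
    have hd := hderiv_neg r hr
    have hh := hpos r hr.le
    simp only [hE_def] at hE0
    nlinarith [mul_pos hc hh]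
  refine ⟨part1, h X * Real.exp (c * X), mul_pos (hpos X le_rfl) (Real.exp_pos _), ?_⟩
  -- Part 2
  have hgd : ∀ r : ℝ, HasDerivAt (fun r => h r * Real.exp (c * r))
      ((deriv h r + c * h r) * Real.exp (c * r)) r := by
    intro r
    have he : HasDerivAt (fun x : ℝ => Real.exp (c * x)) (Real.exp (c * r) * c) r := by
      simpa using (HasDerivAt.exp ((hasDerivAt_id r).const_mul c))
    have := (hd1 r).hasDerivAt.mul he
    refine HasDerivAt.congr_deriv this ?_
    ring
  have hganti : AntitoneOn (fun r => h r * Real.exp (c * r)) (Set.Ici X) := by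
    apply antitoneOn_of_deriv_nonpos (convex_Ici X)
    · exact (hd1.continuous.mul (Real.continuous_exp.comp (continuous_const.mul
        continuous_id))).continuousOn
    · rw [interior_Ici]
      exact fun r _ => (hgd r).differentiableAt.differentiableWithinAt
    · rw [interior_Ici]
      intro r hr
      rw [(hgd r).deriv]
      exact mul_nonpos_of_nonpos_of_nonneg (part1 r hr) (Real.exp_pos _).le
  intro r hr
  have hle : h r * Real.exp (c * r) ≤ h X * Real.exp (c * X) :=
    hganti Set.self_mem_Ici (Set.mem_Ici.mpr hr) hr
  have hstep : h r * Real.exp (c * r) * Real.exp (-c * r) ≤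
      h X * Real.exp (c * X) * Real.exp (-c * r) :=
    mul_le_mul_of_nonneg_right hle (Real.exp_pos _).le
  calc h r = h r * Real.exp (c * r) * Real.exp (-c * r) := by
        rw [mul_assoc, ← Real.exp_add]
        ring_nf
        simp
    _ ≤ h X * Real.exp (c * X) * Real.exp (-c * r) := hstep
end

section
/- Let n ≥ 1 and let g : (0,∞) → ℝ satisfy 0 < g(r) ≤ C·e^{-r}·(1+r)^{(n-3)/2}/r^{n-2} for all r > 0 (with g(r) = e^{-r}/2 when n = 1). Then for every η ∈ (0,1) there is a constant C' > 0 such that for all x ∈ ℝⁿ, ∫_{ℝⁿ} g(‖y - x‖)·e^{-η‖y‖} dy ≤ C'·e^{-η‖x‖}. -/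
open Real MeasureTheory

open Set Metric in
private lemma integrable_fun_norm_aux {n : ℕ} (hn : 1 ≤ n) {f : ℝ → ℝ} (hf : Measurable f)
    (h : IntegrableOn (fun r : ℝ => r ^ (n - 1) * f r) (Set.Ioi (0 : ℝ))) :
    Integrable (fun z : EuclideanSpace ℝ (Fin n) => f ‖z‖) := by
  set E := EuclideanSpace ℝ (Fin n)
  haveI : Nontrivial E := Module.nontrivial_of_finrank_pos (R := ℝ)
    (by rw [finrank_euclideanSpace_fin]; omega)
  have hdim : Module.finrank ℝ E = n := finrank_euclideanSpace_fin
  -- step 5: transfer 1-D integrability through the subtype embedding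
  have h5 : Integrable ((fun r : ℝ => r ^ (n - 1) * f r) ∘ (Subtype.val : Set.Ioi (0:ℝ) → ℝ))
      ((volume : Measure ℝ).comap Subtype.val) := by
    refine ((MeasurableEmbedding.subtype_coe measurableSet_Ioi).integrable_map_iff).1 ?_
    rwa [map_comap_subtype_coe measurableSet_Ioi]
  -- step 4: integrability w.r.t. `volumeIoiPow`
  have h4 : Integrable (fun r : Set.Ioi (0:ℝ) => f r) (Measure.volumeIoiPow (n - 1)) := by
    rw [Measure.volumeIoiPow, integrable_withDensity_iff_integrable_smul'
      ((measurable_subtype_coe.pow_const _).ennreal_ofReal)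
      (Filter.Eventually.of_forall fun _ => ENNReal.ofReal_lt_top)]
    have heq : (fun r : Set.Ioi (0:ℝ) => (ENNReal.ofReal ((r : ℝ) ^ (n - 1))).toReal • f r) =
        fun r : Set.Ioi (0:ℝ) => (r : ℝ) ^ (n - 1) * f r := by
      funext r
      rw [ENNReal.toReal_ofReal (pow_nonneg (le_of_lt r.2) _), smul_eq_mul]
    rw [heq]
    exact h5
  -- step 3: integrability on the product
  have h3 : Integrable (fun p : sphere (0 : E) 1 × Set.Ioi (0:ℝ) => f p.2)
      ((volume : Measure E).toSphere.prod (Measure.volumeIoiPow (n - 1))) := by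
    have := (integrable_const (1 : ℝ)).mul_prod h4 (μ := (volume : Measure E).toSphere)
    simpa using this
  -- step 2: back through the polar-coordinates homeomorphism
  have hMP := Measure.measurePreserving_homeomorphUnitSphereProd (volume : Measure E)
  rw [hdim] at hMP
  have h2 : Integrable (fun x : ({0}ᶜ : Set E) => f ‖(x : E)‖)
      ((volume : Measure E).comap Subtype.val) := by
    exact (hMP.integrable_comp_emb (Homeomorph.measurableEmbedding _)).2 h3 |>.congr
      (Filter.Eventually.of_forall fun x => by simp)
  -- step 1: back to `E`
  have h1 : Integrable (fun z : E => f ‖z‖)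
      (((volume : Measure E).comap Subtype.val).map
        (Subtype.val : ({0}ᶜ : Set E) → E)) := by
    rw [(MeasurableEmbedding.subtype_coe (measurableSet_singleton (0:E)).compl).integrable_map_iff]
    exact h2
  rwa [map_comap_subtype_coe (measurableSet_singleton (0:E)).compl,
    restrict_compl_singleton] at h1

theorem stmt2 (n : ℕ) (hn : 1 ≤ n) (C : ℝ) (hC : 0 < C) (g : ℝ → ℝ)
    (hg : ∀ r : ℝ, 0 < r → 0 < g r ∧
      g r ≤ C * Real.exp (-r) * (1 + r) ^ (((n : ℝ) - 3) / 2) / r ^ ((n : ℝ) - 2))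
    (hg1 : n = 1 → ∀ r : ℝ, 0 < r → g r = Real.exp (-r) / 2) :
    ∀ η : ℝ, 0 < η → η < 1 → ∃ C' > 0, ∀ x : EuclideanSpace ℝ (Fin n),
      ∫ y : EuclideanSpace ℝ (Fin n), g ‖y - x‖ * Real.exp (-η * ‖y‖) ≤
        C' * Real.exp (-η * ‖x‖) := by
  intro η hη0 hη1
  haveI : Nontrivial (EuclideanSpace ℝ (Fin n)) := Module.nontrivial_of_finrank_pos (R := ℝ)
    (by rw [finrank_euclideanSpace_fin]; omega)
  set a : ℝ := ((n : ℝ) - 3) / 2 with ha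
  set B : ℝ → ℝ := fun r =>
    C * Real.exp (-r) * (1 + r) ^ a / r ^ ((n : ℝ) - 2) * Real.exp (η * r) with hB
  have hBmeas : Measurable B := by
    apply Measurable.mul
    · apply Measurable.div
      · exact (measurable_const.mul (measurable_id.neg.exp)).mul
          ((measurable_const.add measurable_id).pow measurable_const)
      · exact measurable_id.pow measurable_const
    · exact (measurable_const.mul measurable_id).exp
  have hBnonneg : ∀ r : ℝ, 0 ≤ r → 0 ≤ B r := by
    intro r hr
    exact mul_nonneg (div_nonneg (mul_nonneg (mul_nonneg hC.le (exp_nonneg _))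
      (rpow_nonneg (by linarith) _)) (rpow_nonneg hr _)) (exp_nonneg _)
  -- the key identity on `(0, ∞)`
  have hkey : ∀ r : ℝ, 0 < r →
      r ^ (n - 1) * B r = C * r * Real.exp ((η - 1) * r) * (1 + r) ^ a := by
    intro r hr
    have h1 : (r : ℝ) ^ (n - 1) = r ^ ((n : ℝ) - 1) := by
      rw [← Real.rpow_natCast r (n - 1), Nat.cast_sub hn, Nat.cast_one]
    have h2 : r ^ ((n : ℝ) - 1) = r ^ ((n : ℝ) - 2) * r := by
      rw [← Real.rpow_add_one (ne_of_gt hr) ((n : ℝ) - 2)]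
      ring_nf
    have h3 : r ^ ((n : ℝ) - 2) ≠ 0 := ne_of_gt (rpow_pos_of_pos hr _)
    have h4 : Real.exp ((η - 1) * r) = Real.exp (-r) * Real.exp (η * r) := by
      rw [← Real.exp_add]; congr 1; ring
    rw [hB, h1, h2, h4]
    field_simp
  -- an integrable radial majorant
  have hb : (0:ℝ) < 1 - η := by linarith
  have habs : (0:ℝ) ≤ |a| := abs_nonneg a
  have hG : IntegrableOn (fun x : ℝ => x ^ (1 + |a|) * Real.exp (-(1 - η) * x))
      (Set.Ioi (0:ℝ)) := by
    have h := integrableOn_rpow_mul_exp_neg_mul_rpow (s := 1 + |a|) (p := 1)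
      (by linarith) one_pos hb
    simpa [Real.rpow_one] using h
  have hInt : Integrable (fun z : EuclideanSpace ℝ (Fin n) => B ‖z‖) := by
    apply integrable_fun_norm_aux hn hBmeas
    rw [show Set.Ioi (0:ℝ) = Set.Ioc 0 1 ∪ Set.Ioi 1 from
      (Set.Ioc_union_Ioi_eq_Ioi zero_le_one).symm, integrableOn_union]
    have hmeas : Measurable fun r : ℝ => r ^ (n - 1) * B r :=
      (measurable_id.pow_const _).mul hBmeas
    constructor
    · refine Integrable.mono' (integrable_const (C * 2 ^ |a|))
        hmeas.aestronglyMeasurable ?_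
      rw [ae_restrict_iff' measurableSet_Ioc]
      refine Filter.Eventually.of_forall fun r hr => ?_
      have hr0 : 0 < r := hr.1
      rw [Real.norm_of_nonneg (mul_nonneg (pow_nonneg hr0.le _) (hBnonneg r hr0.le)),
        hkey r hr0]
      have e1 : Real.exp ((η - 1) * r) ≤ 1 := by
        rw [Real.exp_le_one_iff]
        nlinarith
      have e2 : (1 + r) ^ a ≤ 2 ^ |a| := by
        calc (1 + r) ^ a ≤ (1 + r) ^ |a| :=
              Real.rpow_le_rpow_of_exponent_le (by linarith) (le_abs_self a)
          _ ≤ 2 ^ |a| := Real.rpow_le_rpow (by linarith) (by linarith [hr.2]) habs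
      have e0 : (0:ℝ) ≤ (1 + r) ^ a := Real.rpow_nonneg (by linarith) a
      have := mul_le_mul (mul_le_mul (mul_le_mul le_rfl hr.2 hr0.le hC.le) e1
        (Real.exp_nonneg _) (by nlinarith)) e2 e0 (by nlinarith)
      calc C * r * Real.exp ((η - 1) * r) * (1 + r) ^ a ≤ C * 1 * 1 * 2 ^ |a| := this
        _ = C * 2 ^ |a| := by ring
    · refine Integrable.mono'
        (((hG.mono_set (Set.Ioi_subset_Ioi zero_le_one)).const_mul (C * 2 ^ |a|)))
        hmeas.aestronglyMeasurable ?_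
      rw [ae_restrict_iff' measurableSet_Ioi]
      refine Filter.Eventually.of_forall fun r hr => ?_
      have hr1 : (1:ℝ) < r := hr
      have hr0 : (0:ℝ) < r := lt_trans zero_lt_one hr1
      rw [Real.norm_of_nonneg (mul_nonneg (pow_nonneg hr0.le _) (hBnonneg r hr0.le)),
        hkey r hr0]
      have e2 : (1 + r) ^ a ≤ 2 ^ |a| * r ^ |a| := by
        calc (1 + r) ^ a ≤ (1 + r) ^ |a| :=
              Real.rpow_le_rpow_of_exponent_le (by linarith) (le_abs_self a)
          _ ≤ (2 * r) ^ |a| := Real.rpow_le_rpow (by linarith) (by linarith) habs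
          _ = 2 ^ |a| * r ^ |a| := Real.mul_rpow zero_le_two hr0.le
      have e3 : r * r ^ |a| = r ^ (1 + |a|) := by
        rw [Real.rpow_add hr0, Real.rpow_one]
      have e4 : Real.exp ((η - 1) * r) = Real.exp (-(1 - η) * r) := by ring_nf
      calc C * r * Real.exp ((η - 1) * r) * (1 + r) ^ a
          ≤ C * r * Real.exp ((η - 1) * r) * (2 ^ |a| * r ^ |a|) := by
            have h0 : (0:ℝ) ≤ C * r * Real.exp ((η - 1) * r) := by positivity
            exact mul_le_mul_of_nonneg_left e2 h0
        _ = C * 2 ^ |a| * (r ^ (1 + |a|) * Real.exp (-(1 - η) * r)) := by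
            rw [← e3, ← e4]; ring
  set I := ∫ z : EuclideanSpace ℝ (Fin n), B ‖z‖ with hI
  have hI0 : 0 ≤ I := integral_nonneg fun z => hBnonneg _ (norm_nonneg _)
  refine ⟨I + 1, by linarith, fun x => ?_⟩
  have hmaj : Integrable
      (fun y : EuclideanSpace ℝ (Fin n) => Real.exp (-η * ‖x‖) * B ‖y - x‖) :=
    (hInt.comp_sub_right x).const_mul _
  have hne : ∀ᵐ y : EuclideanSpace ℝ (Fin n) ∂volume, y ≠ x := by
    refine ae_iff.2 ?_
    simp only [ne_eq, not_not, Set.setOf_eq_eq_singleton]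
    exact measure_singleton x
  have hnonneg : ∀ᵐ y : EuclideanSpace ℝ (Fin n) ∂volume,
      0 ≤ g ‖y - x‖ * Real.exp (-η * ‖y‖) := by
    filter_upwards [hne] with y hy
    have hr : 0 < ‖y - x‖ := by rw [norm_pos_iff]; exact sub_ne_zero.2 hy
    exact mul_nonneg (hg _ hr).1.le (exp_nonneg _)
  have hle : ∀ᵐ y : EuclideanSpace ℝ (Fin n) ∂volume,
      g ‖y - x‖ * Real.exp (-η * ‖y‖) ≤ Real.exp (-η * ‖x‖) * B ‖y - x‖ := by
    filter_upwards [hne] with y hy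
    have hr : 0 < ‖y - x‖ := by rw [norm_pos_iff]; exact sub_ne_zero.2 hy
    obtain ⟨hg0, hgle⟩ := hg _ hr
    have htri : ‖x‖ ≤ ‖y‖ + ‖y - x‖ := by
      calc ‖x‖ = ‖y - (y - x)‖ := by congr 1; abel
        _ ≤ ‖y‖ + ‖y - x‖ := norm_sub_le _ _
    have h1 : Real.exp (-η * ‖y‖) ≤ Real.exp (η * ‖y - x‖) * Real.exp (-η * ‖x‖) := by
      rw [← Real.exp_add]
      apply Real.exp_le_exp.2
      nlinarith
    have hbnd0 : (0:ℝ) ≤ C * Real.exp (-‖y - x‖) * (1 + ‖y - x‖) ^ a / ‖y - x‖ ^ ((n:ℝ) - 2) :=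
      div_nonneg (mul_nonneg (mul_nonneg hC.le (exp_nonneg _))
        (Real.rpow_nonneg (by positivity) _)) (Real.rpow_nonneg hr.le _)
    calc g ‖y - x‖ * Real.exp (-η * ‖y‖)
        ≤ (C * Real.exp (-‖y - x‖) * (1 + ‖y - x‖) ^ a / ‖y - x‖ ^ ((n:ℝ) - 2)) *
            (Real.exp (η * ‖y - x‖) * Real.exp (-η * ‖x‖)) :=
          mul_le_mul hgle h1 (exp_nonneg _) hbnd0
      _ = Real.exp (-η * ‖x‖) * B ‖y - x‖ := by simp only [hB]; ring
  calc ∫ y : EuclideanSpace ℝ (Fin n), g ‖y - x‖ * Real.exp (-η * ‖y‖)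
      ≤ ∫ y : EuclideanSpace ℝ (Fin n), Real.exp (-η * ‖x‖) * B ‖y - x‖ :=
        integral_mono_of_nonneg hnonneg hmaj hle
    _ = Real.exp (-η * ‖x‖) * ∫ y : EuclideanSpace ℝ (Fin n), B ‖y - x‖ :=
        integral_const_mul _ _
    _ = Real.exp (-η * ‖x‖) * I := by
        rw [hI, integral_sub_right_eq_self (fun z : EuclideanSpace ℝ (Fin n) => B ‖z‖) x]
    _ ≤ (I + 1) * Real.exp (-η * ‖x‖) := by nlinarith [Real.exp_pos (-η * ‖x‖)]
end

section
/- Let n = N - 1 ≥ 1 and let g : (0,∞) → ℝ satisfy 0 < g(r) ≤ C·e^{-r}·(1+r)^{(n-3)/2}/r^{n-2} for r > 0 (with g(r) = e^{-r}/2 when n = 1). Then for every b > 1 there is a constant C' > 0 such that for all x ∈ ℝⁿ with ‖x‖ ≥ 1, ∫_{ℝⁿ} g(‖y - x‖)·e^{-b‖y‖} dy ≤ C'·‖x‖^{(2-N)/2}·e^{-‖x‖}. -/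
open Real MeasureTheory Set Metric Filter
open scoped ENNReal NNReal

lemma aux_integrableOn_rpow_ball {E : Type*} [NormedAddCommGroup E] [NormedSpace ℝ E]
    [FiniteDimensional ℝ E] [MeasurableSpace E] [BorelSpace E]
    (μ : Measure E) [μ.IsAddHaarMeasure] {s : ℝ}
    (hs : -(Module.finrank ℝ E : ℝ) < s) (R : ℝ) :
    IntegrableOn (fun x => ‖x‖ ^ s) (Metric.ball (0 : E) R) μ := by
  rcases le_or_gt R 0 with hR | hR
  · rw [Metric.ball_eq_empty.mpr hR]; exact integrableOn_empty
  haveI : IsFiniteMeasure (μ.restrict (ball (0 : E) R)) :=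
    ⟨by rw [Measure.restrict_apply_univ]; exact measure_ball_lt_top⟩
  have hmeas : Measurable fun x : E => ‖x‖ ^ s := by fun_prop
  rcases le_or_gt 0 s with hs0 | hs0
  · refine Integrable.mono' (integrable_const (R ^ s)) hmeas.aestronglyMeasurable ?_
    filter_upwards [ae_restrict_mem measurableSet_ball] with y hy
    rw [Real.norm_eq_abs, abs_of_nonneg (Real.rpow_nonneg (norm_nonneg _) _)]
    exact Real.rpow_le_rpow (norm_nonneg _) (le_of_lt (mem_ball_zero_iff.mp hy)) hs0
  · have hd : (0 : ℝ) < (Module.finrank ℝ E : ℝ) := by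
      rcases Nat.eq_zero_or_pos (Module.finrank ℝ E) with h | h
      · rw [h] at hs; norm_num at hs; linarith
      · exact_mod_cast h
    refine ⟨hmeas.aestronglyMeasurable, ?_⟩
    have hnn : (∫⁻ a in ball (0 : E) R, ‖(‖a‖ ^ s)‖ₑ ∂μ)
        = ∫⁻ a in ball (0 : E) R, ENNReal.ofReal (‖a‖ ^ s) ∂μ :=
      lintegral_enorm_of_nonneg fun a => Real.rpow_nonneg (norm_nonneg _) _
    rw [HasFiniteIntegral, hnn, lintegral_eq_lintegral_meas_le _
      (Eventually.of_forall fun a => Real.rpow_nonneg (norm_nonneg _) _) hmeas.aemeasurable]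
    have hsub : ∀ t : ℝ, 0 < t →
        {a : E | t ≤ ‖a‖ ^ s} ⊆ Metric.closedBall (0 : E) (t ^ s⁻¹) := by
      intro t ht a ha
      simp only [mem_setOf_eq] at ha
      have hna : 0 < ‖a‖ := by
        rcases eq_or_lt_of_le (norm_nonneg a) with h | h
        · exfalso
          rw [← h, Real.zero_rpow hs0.ne] at ha
          linarith
        · exact h
      rw [mem_closedBall_zero_iff]
      exact (Real.le_rpow_inv_iff_of_neg hna ht hs0).mpr ha
    calc ∫⁻ t in Ioi 0, μ.restrict (ball (0 : E) R) {a : E | t ≤ ‖a‖ ^ s}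
        ≤ ∫⁻ t in Ioc 0 1 ∪ Ioi 1, μ.restrict (ball (0 : E) R) {a : E | t ≤ ‖a‖ ^ s} :=
          lintegral_mono_set Ioi_subset_Ioc_union_Ioi
      _ ≤ (∫⁻ t in Ioc 0 1, μ.restrict (ball (0 : E) R) {a : E | t ≤ ‖a‖ ^ s})
          + ∫⁻ t in Ioi 1, μ.restrict (ball (0 : E) R) {a : E | t ≤ ‖a‖ ^ s} :=
          lintegral_union_le _ _ _
      _ < ∞ := by
          refine ENNReal.add_lt_top.2 ⟨?_, ?_⟩
          · refine lt_of_le_of_lt (setLIntegral_mono' measurableSet_Ioc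
              (fun t _ => ?_ : ∀ t ∈ Ioc (0:ℝ) 1,
                μ.restrict (ball (0 : E) R) {a : E | t ≤ ‖a‖ ^ s} ≤ μ (ball (0 : E) R))) ?_
            · calc μ.restrict (ball (0 : E) R) {a : E | t ≤ ‖a‖ ^ s}
                  ≤ μ.restrict (ball (0 : E) R) univ := measure_mono (subset_univ _)
                _ = μ (ball (0 : E) R) := Measure.restrict_apply_univ _
            · rw [setLIntegral_const]
              exact ENNReal.mul_lt_top measure_ball_lt_top (by simp)
          · have hexp : s⁻¹ * (Module.finrank ℝ E : ℝ) < -1 := by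
              rw [inv_mul_eq_div, div_lt_iff_of_neg hs0]
              linarith
            calc (∫⁻ t in Ioi (1:ℝ), μ.restrict (ball (0 : E) R) {a : E | t ≤ ‖a‖ ^ s})
                ≤ ∫⁻ t in Ioi (1:ℝ),
                    ENNReal.ofReal (t ^ (s⁻¹ * (Module.finrank ℝ E : ℝ))) * μ (ball (0 : E) 1) := by
                  refine setLIntegral_mono' measurableSet_Ioi fun t ht => ?_
                  have ht0 : (0 : ℝ) < t := lt_trans one_pos ht
                  calc μ.restrict (ball (0 : E) R) {a : E | t ≤ ‖a‖ ^ s}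
                      ≤ μ {a : E | t ≤ ‖a‖ ^ s} := Measure.restrict_le_self _
                    _ ≤ μ (Metric.closedBall (0 : E) (t ^ s⁻¹)) := measure_mono (hsub t ht0)
                    _ = ENNReal.ofReal ((t ^ s⁻¹) ^ Module.finrank ℝ E) * μ (ball (0 : E) 1) :=
                        μ.addHaar_closedBall _ (Real.rpow_nonneg ht0.le _)
                    _ = ENNReal.ofReal (t ^ (s⁻¹ * (Module.finrank ℝ E : ℝ))) * μ (ball (0 : E) 1) := by
                        rw [← Real.rpow_natCast (t ^ s⁻¹) (Module.finrank ℝ E),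
                          ← Real.rpow_mul ht0.le]
              _ < ∞ := by
                  rw [lintegral_mul_const' _ _ measure_ball_lt_top.ne]
                  exact ENNReal.mul_lt_top
                    ((integrableOn_Ioi_rpow_of_lt hexp one_pos).setLIntegral_lt_top)
                    measure_ball_lt_top

lemma aux_integral_rpow_ball {E : Type*} [NormedAddCommGroup E] [NormedSpace ℝ E]
    [Nontrivial E] [FiniteDimensional ℝ E] [MeasurableSpace E] [BorelSpace E]
    (μ : Measure E) [μ.IsAddHaarMeasure] {R : ℝ} (hR : 0 ≤ R) :
    ∫ y in Metric.ball (0 : E) R, ‖y‖ ^ (2 - (Module.finrank ℝ E : ℝ)) ∂μ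
      = (Module.finrank ℝ E : ℝ) * (μ (Metric.ball (0 : E) 1)).toReal * (R ^ 2 / 2) := by
  set d := Module.finrank ℝ E with hd
  have hd1 : 1 ≤ d := Module.finrank_pos
  set s : ℝ := 2 - (d : ℝ) with hs
  have h1 : (fun x : E => (Iio R).indicator (fun t : ℝ => t ^ s) ‖x‖)
      = (Metric.ball (0 : E) R).indicator (fun x => ‖x‖ ^ s) := by
    funext x
    by_cases hx : ‖x‖ < R
    · rw [Set.indicator_of_mem (by exact hx : ‖x‖ ∈ Iio R),
        Set.indicator_of_mem (mem_ball_zero_iff.mpr hx)]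
    · rw [Set.indicator_of_notMem (by exact hx : ‖x‖ ∉ Iio R),
        Set.indicator_of_notMem (fun h => hx (mem_ball_zero_iff.mp h))]
  have h2 := integral_fun_norm_addHaar μ ((Iio R).indicator (fun t : ℝ => t ^ s))
  rw [h1, integral_indicator measurableSet_ball] at h2
  rw [h2]
  have h3 : (fun y : ℝ => y ^ (d - 1) • (Iio R).indicator (fun t : ℝ => t ^ s) y)
      = (Iio R).indicator (fun t : ℝ => t ^ (d - 1) * t ^ s) := by
    funext y
    by_cases hy : y ∈ Iio R
    · rw [Set.indicator_of_mem hy, Set.indicator_of_mem hy, smul_eq_mul]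
    · rw [Set.indicator_of_notMem hy, Set.indicator_of_notMem hy, smul_zero]
  rw [h3, setIntegral_indicator measurableSet_Iio, Ioi_inter_Iio]
  have h4 : ∫ t in Ioo (0 : ℝ) R, t ^ (d - 1) * t ^ s = ∫ t in Ioo (0 : ℝ) R, t := by
    refine setIntegral_congr_fun measurableSet_Ioo fun t ht => ?_
    have ht0 : (0 : ℝ) < t := ht.1
    have : (t : ℝ) ^ (d - 1) = t ^ ((d : ℝ) - 1) := by
      rw [← Real.rpow_natCast t (d - 1)]
      congr 1
      push_cast [Nat.cast_sub hd1]
      ring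
    rw [this, ← Real.rpow_add ht0]
    norm_num [hs]
  rw [h4]
  have h5 : ∫ t in Ioo (0 : ℝ) R, t = R ^ 2 / 2 := by
    rw [Measure.restrict_congr_set Ioo_ae_eq_Ioc, ← intervalIntegral.integral_of_le hR,
      integral_id]
    ring
  rw [h5, nsmul_eq_mul, smul_eq_mul]
  rw [Measure.real]
  ring

lemma aux_integrable_exp_neg_mul_norm {E : Type*} [NormedAddCommGroup E] [NormedSpace ℝ E]
    [FiniteDimensional ℝ E] [MeasurableSpace E] [BorelSpace E]
    (μ : Measure E) [μ.IsAddHaarMeasure] {c : ℝ} (hc : 0 < c) :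
    Integrable (fun x : E => Real.exp (-c * ‖x‖)) μ := by
  set d : ℕ := Module.finrank ℝ E + 1 with hd
  have hdr : (Module.finrank ℝ E : ℝ) < (d : ℝ) := by push_cast [hd]; linarith
  set M : ℝ := Real.exp c * (d.factorial : ℝ) / c ^ d with hM
  refine Integrable.mono' ((integrable_one_add_norm (r := (d : ℝ)) hdr).const_mul M)
    (Continuous.aestronglyMeasurable (by continuity)) (Eventually.of_forall fun x => ?_)
  rw [Real.norm_eq_abs, abs_of_pos (Real.exp_pos _)]
  set t : ℝ := ‖x‖ with ht
  have ht0 : 0 ≤ t := norm_nonneg _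
  have h1t : (0 : ℝ) < 1 + t := by linarith
  have key : (c * (1 + t)) ^ d / (d.factorial : ℝ) ≤ Real.exp (c * (1 + t)) :=
    Real.pow_div_factorial_le_exp _ (by positivity) d
  have hpow : (0 : ℝ) < (c * (1 + t)) ^ d := by positivity
  have hfac : (0 : ℝ) < (d.factorial : ℝ) := by positivity
  have h2 : Real.exp (-(c * (1 + t))) ≤ (d.factorial : ℝ) / (c * (1 + t)) ^ d := by
    rw [Real.exp_neg, inv_le_comm₀ (Real.exp_pos _) (by positivity), inv_div]
    exact key
  have hgoal : Real.exp (-c * t) = Real.exp c * Real.exp (-(c * (1 + t))) := by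
    rw [← Real.exp_add]; ring_nf
  have h3 : M * (1 + t) ^ (-(d : ℝ)) = Real.exp c * ((d.factorial : ℝ) / (c * (1 + t)) ^ d) := by
    rw [Real.rpow_neg h1t.le, Real.rpow_natCast, hM, mul_pow]
    field_simp
  rw [hgoal, h3]
  exact mul_le_mul_of_nonneg_left h2 (Real.exp_pos c).le


set_option maxHeartbeats 1000000 in
theorem stmt3 (N : ℕ) (hN : 2 ≤ N) (n : ℕ) (hn : n = N - 1) (C : ℝ) (hC : 0 < C)
    (g : ℝ → ℝ)
    (hg : ∀ r : ℝ, 0 < r → 0 < g r ∧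
      g r ≤ C * Real.exp (-r) * (1 + r) ^ (((n : ℝ) - 3) / 2) / r ^ ((n : ℝ) - 2))
    (hg1 : n = 1 → ∀ r : ℝ, 0 < r → g r = Real.exp (-r) / 2) :
    ∀ b : ℝ, 1 < b → ∃ C' > 0, ∀ x : EuclideanSpace ℝ (Fin n), 1 ≤ ‖x‖ →
      ∫ y : EuclideanSpace ℝ (Fin n), g ‖y - x‖ * Real.exp (-b * ‖y‖) ≤
        C' * ‖x‖ ^ ((2 - (N : ℝ)) / 2) * Real.exp (-‖x‖) := by
  intro b hb
  have hn1 : 1 ≤ n := by omega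
  have hnR : (1 : ℝ) ≤ (n : ℝ) := by exact_mod_cast hn1
  haveI : Nontrivial (EuclideanSpace ℝ (Fin n)) := by
    have h : 0 < Module.finrank ℝ (EuclideanSpace ℝ (Fin n)) := by
      simp only [finrank_euclideanSpace, Fintype.card_fin]; omega
    exact Module.nontrivial_of_finrank_pos h
  have hdim : Module.finrank ℝ (EuclideanSpace ℝ (Fin n)) = n := by
    simp [finrank_euclideanSpace]
  set c : ℝ := b - 1 with hcdef
  have hc : 0 < c := by rw [hcdef]; linarith
  set m3 : ℝ := ((n : ℝ) - 3) / 2 with hm3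
  set m' : ℝ := max m3 0 with hm'
  have hm'0 : 0 ≤ m' := le_max_right _ _
  set K : ℝ := (3 : ℝ) ^ m' with hKdef
  have hK0 : 0 < K := Real.rpow_pos_of_pos (by norm_num) _
  have hK1 : 1 ≤ K := Real.one_le_rpow (by norm_num) hm'0
  set k : ℕ := n + 2 with hkdef
  set mB : ℝ := (volume (Metric.ball (0 : EuclideanSpace ℝ (Fin n)) 1)).toReal with hmBdef
  have hmB0 : 0 < mB :=
    ENNReal.toReal_pos (measure_ball_pos _ _ one_pos).ne' measure_ball_lt_top.ne
  have hJint : Integrable (fun y : EuclideanSpace ℝ (Fin n) => Real.exp (-c * ‖y‖)) :=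
    aux_integrable_exp_neg_mul_norm volume hc
  set J : ℝ := ∫ y : EuclideanSpace ℝ (Fin n), Real.exp (-c * ‖y‖) with hJdef
  have hJ0 : 0 ≤ J := integral_nonneg fun y => (Real.exp_pos _).le
  set q : ℝ := (1 - (n : ℝ)) / 2 with hq
  have hq0 : q ≤ 0 := by rw [hq]; linarith
  set p : ℝ := ((n : ℝ) - 1) / 2 with hp
  have hp0 : 0 ≤ p := by rw [hp]; linarith
  have hqp : q = -p := by rw [hq, hp]; ring
  set B₁ : ℝ := ((n : ℝ) * mB / 8) * 2 ^ k * (k.factorial : ℝ) * (2 / c) ^ k with hB₁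
  have hB₁0 : 0 < B₁ := by
    have h1 : (0:ℝ) < (n:ℝ) := by linarith
    have h2 : (0:ℝ) < (k.factorial : ℝ) := by positivity
    positivity
  have h2q : (0 : ℝ) < (2:ℝ) ^ q := Real.rpow_pos_of_pos two_pos _
  set B₂ : ℝ := K * J / 2 ^ q with hB₂
  have hB₂0 : 0 ≤ B₂ := by positivity
  refine ⟨C * (B₁ + B₂), by positivity, ?_⟩
  intro x hx
  set R : ℝ := ‖x‖ with hRdef
  have hR1 : 1 ≤ R := hx
  have hR0 : 0 < R := by linarith
  have hexpq : (2 - (N : ℝ)) / 2 = q := by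
    have hnN : (n : ℝ) = (N : ℝ) - 1 := by
      subst hn
      push_cast [Nat.cast_sub (by omega : 1 ≤ N)]
      ring
    rw [hq, hnN]; ring
  rw [hexpq]
  set R' : ℝ := R / 2 with hR'def
  have hR'0 : 0 < R' := by positivity
  have hR'le : R' ≤ R := by rw [hR'def]; linarith
  set s : ℝ := 2 - (n : ℝ) with hsdef
  set A₁ : ℝ := C * (1 + R) ^ m' * Real.exp (-R) * Real.exp (-(c * R')) with hA₁
  have hA₁0 : 0 ≤ A₁ := by positivity
  set A₂ : ℝ := C * K * R' ^ q * Real.exp (-R) with hA₂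
  have hA₂0 : 0 ≤ A₂ := by positivity
  -- integrability of the majorant
  have hsfin : -(Module.finrank ℝ (EuclideanSpace ℝ (Fin n)) : ℝ) < s := by
    rw [hdim, hsdef]; linarith
  have hind : (fun y : EuclideanSpace ℝ (Fin n) =>
        (Metric.ball x R').indicator (fun y => ‖y - x‖ ^ s) y)
      = fun y => (Metric.ball (0 : EuclideanSpace ℝ (Fin n)) R').indicator
          (fun z => ‖z‖ ^ s) (y - x) := by
    funext y
    by_cases h : ‖y - x‖ < R'
    · rw [Set.indicator_of_mem (mem_ball_iff_norm.mpr h),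
        Set.indicator_of_mem (mem_ball_zero_iff.mpr h)]
    · rw [Set.indicator_of_notMem (fun hh => h (mem_ball_iff_norm.mp hh)),
        Set.indicator_of_notMem (fun hh => h (mem_ball_zero_iff.mp hh))]
  have hFi0 : Integrable ((Metric.ball (0 : EuclideanSpace ℝ (Fin n)) R').indicator
      (fun z => ‖z‖ ^ s)) :=
    (aux_integrableOn_rpow_ball volume hsfin R').integrable_indicator measurableSet_ball
  have hFi1 : Integrable (fun y : EuclideanSpace ℝ (Fin n) =>
      (Metric.ball x R').indicator (fun y => ‖y - x‖ ^ s) y) := by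
    rw [hind]; exact hFi0.comp_sub_right x
  -- a.e. estimates
  have hae : ∀ᵐ y : EuclideanSpace ℝ (Fin n), y ≠ x := by
    rw [ae_iff]
    simp only [ne_eq, not_not, setOf_eq_eq_singleton]
    exact measure_singleton x
  have hf0 : 0 ≤ᵐ[volume] fun y : EuclideanSpace ℝ (Fin n) =>
      g ‖y - x‖ * Real.exp (-b * ‖y‖) := by
    filter_upwards [hae] with y hy
    have hr : 0 < ‖y - x‖ := by rwa [norm_pos_iff, sub_ne_zero]
    exact mul_nonneg ((hg _ hr).1.le) (Real.exp_pos _).le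
  have hfF : (fun y : EuclideanSpace ℝ (Fin n) => g ‖y - x‖ * Real.exp (-b * ‖y‖))
      ≤ᵐ[volume] fun y =>
        A₁ * (Metric.ball x R').indicator (fun y => ‖y - x‖ ^ s) y
          + A₂ * Real.exp (-c * ‖y‖) := by
    filter_upwards [hae] with y hy
    set r : ℝ := ‖y - x‖ with hrdef
    have hr : 0 < r := by rw [hrdef]; rwa [norm_pos_iff, sub_ne_zero]
    have hgr : g r ≤ C * Real.exp (-r) * (1 + r) ^ m3 / r ^ ((n:ℝ) - 2) := (hg r hr).2
    have hdiv : C * Real.exp (-r) * (1 + r) ^ m3 / r ^ ((n:ℝ) - 2)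
        = C * Real.exp (-r) * (1 + r) ^ m3 * r ^ s := by
      rw [div_eq_mul_inv, ← Real.rpow_neg hr.le]
      congr 2
      rw [hsdef]; ring
    rw [hdiv] at hgr
    have htri : R ≤ r + ‖y‖ := by
      have h1 : ‖x‖ ≤ ‖x - y‖ + ‖y‖ := by
        calc ‖x‖ = ‖(x - y) + y‖ := by rw [sub_add_cancel]
          _ ≤ ‖x - y‖ + ‖y‖ := norm_add_le _ _
      rw [norm_sub_rev] at h1
      exact h1
    have hE : Real.exp (-r) * Real.exp (-b * ‖y‖)
        = Real.exp (-(r + ‖y‖)) * Real.exp (-(c * ‖y‖)) := by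
      rw [← Real.exp_add, ← Real.exp_add]
      congr 1
      rw [hcdef]; ring
    have hexpR : Real.exp (-(r + ‖y‖)) ≤ Real.exp (-R) :=
      Real.exp_le_exp.mpr (by linarith)
    have hchain : g r * Real.exp (-b * ‖y‖)
        ≤ C * (1 + r) ^ m3 * r ^ s * (Real.exp (-(r + ‖y‖)) * Real.exp (-(c * ‖y‖))) := by
      calc g r * Real.exp (-b * ‖y‖)
          ≤ (C * Real.exp (-r) * (1 + r) ^ m3 * r ^ s) * Real.exp (-b * ‖y‖) :=
            mul_le_mul_of_nonneg_right hgr (Real.exp_pos _).le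
        _ = C * (1 + r) ^ m3 * r ^ s * (Real.exp (-r) * Real.exp (-b * ‖y‖)) := by ring
        _ = _ := by rw [hE]
    by_cases hcase : y ∈ Metric.ball x R'
    · -- near the singularity
      have hrR' : r < R' := mem_ball_iff_norm.mp hcase
      rw [Set.indicator_of_mem hcase]
      have hyn : R' ≤ ‖y‖ := by
        have h1 : ‖x‖ - ‖y‖ ≤ ‖x - y‖ := norm_sub_norm_le x y
        rw [norm_sub_rev] at h1
        rw [hR'def]; rw [hR'def] at hrR'
        linarith
      have h1r : (1 + r) ^ m3 ≤ (1 + R) ^ m' := by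
        calc (1 + r) ^ m3 ≤ (1 + r) ^ m' :=
              Real.rpow_le_rpow_of_exponent_le (by linarith) (le_max_left _ _)
          _ ≤ (1 + R) ^ m' := by
              refine Real.rpow_le_rpow (by linarith) (by linarith) hm'0
      have hec : Real.exp (-(c * ‖y‖)) ≤ Real.exp (-(c * R')) := by
        refine Real.exp_le_exp.mpr ?_
        have := mul_le_mul_of_nonneg_left hyn hc.le
        linarith
      have : g r * Real.exp (-b * ‖y‖) ≤ A₁ * r ^ s := by
        calc g r * Real.exp (-b * ‖y‖)
            ≤ C * (1 + r) ^ m3 * r ^ s * (Real.exp (-(r + ‖y‖)) * Real.exp (-(c * ‖y‖))) :=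
              hchain
          _ ≤ C * (1 + R) ^ m' * r ^ s * (Real.exp (-R) * Real.exp (-(c * R'))) := by
              have hrs : (0:ℝ) ≤ r ^ s := Real.rpow_nonneg hr.le _
              have h1rm : (0:ℝ) ≤ (1 + r) ^ m3 := Real.rpow_nonneg (by linarith) _
              gcongr C * ?_ * r ^ s * ?_ <;>
                first
                  | exact h1r
                  | exact mul_le_mul hexpR hec (Real.exp_pos _).le (Real.exp_pos _).le
          _ = A₁ * r ^ s := by rw [hA₁]; ring
      calc g r * Real.exp (-b * ‖y‖) ≤ A₁ * r ^ s := this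
        _ ≤ A₁ * r ^ s + A₂ * Real.exp (-c * ‖y‖) := le_add_of_nonneg_right (by positivity)
    · -- away from the singularity
      rw [Set.indicator_of_notMem hcase]
      have hrR' : R' ≤ r := le_of_not_gt fun h => hcase (mem_ball_iff_norm.mpr h)
      have hr12 : 1 / 2 ≤ r := by rw [hR'def] at hrR'; linarith
      have b1 : (1 + r) ^ m3 ≤ K * r ^ m3 := by
        rcases le_or_gt 0 m3 with h | h
        · have hm'eq : m' = m3 := max_eq_left h
          calc (1 + r) ^ m3 ≤ (3 * r) ^ m3 :=
                Real.rpow_le_rpow (by linarith) (by linarith) h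
            _ = 3 ^ m3 * r ^ m3 := Real.mul_rpow (by norm_num) hr.le
            _ = K * r ^ m3 := by rw [hKdef, hm'eq]
        · calc (1 + r) ^ m3 ≤ r ^ m3 :=
              Real.rpow_le_rpow_of_nonpos hr (by linarith) h.le
            _ ≤ K * r ^ m3 := le_mul_of_one_le_left (Real.rpow_nonneg hr.le _) hK1
      have b2 : r ^ m3 * r ^ s = r ^ q := by
        rw [← Real.rpow_add hr]
        congr 1
        rw [hm3, hsdef, hq]; ring
      have b3 : r ^ q ≤ R' ^ q := Real.rpow_le_rpow_of_nonpos hR'0 hrR' hq0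
      calc g r * Real.exp (-b * ‖y‖)
          ≤ C * (1 + r) ^ m3 * r ^ s * (Real.exp (-(r + ‖y‖)) * Real.exp (-(c * ‖y‖))) :=
            hchain
        _ ≤ C * (K * r ^ m3) * r ^ s * (Real.exp (-R) * Real.exp (-(c * ‖y‖))) := by
            have h1 : (0:ℝ) ≤ r ^ s := Real.rpow_nonneg hr.le _
            have h2 : (0:ℝ) ≤ (1 + r) ^ m3 := Real.rpow_nonneg (by linarith) _
            gcongr C * ?_ * r ^ s * (?_ * Real.exp (-(c * ‖y‖))) <;>
              first | exact b1 | exact hexpR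
        _ = C * K * (r ^ m3 * r ^ s) * Real.exp (-R) * Real.exp (-(c * ‖y‖)) := by ring
        _ = C * K * r ^ q * Real.exp (-R) * Real.exp (-(c * ‖y‖)) := by rw [b2]
        _ ≤ C * K * R' ^ q * Real.exp (-R) * Real.exp (-(c * ‖y‖)) := by
            have hrq : (0:ℝ) ≤ r ^ q := Real.rpow_nonneg hr.le _
            gcongr C * K * ?_ * Real.exp (-R) * Real.exp (-(c * ‖y‖))
        _ = A₂ * Real.exp (-c * ‖y‖) := by rw [hA₂, neg_mul]
        _ ≤ 0 + A₂ * Real.exp (-c * ‖y‖) := by norm_num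
        _ = A₁ * 0 + A₂ * Real.exp (-c * ‖y‖) := by ring
  -- value of the singular integral
  have haux2 := aux_integral_rpow_ball (volume : Measure (EuclideanSpace ℝ (Fin n))) hR'0.le
  rw [hdim, ← hmBdef, ← hsdef] at haux2
  have hI : (∫ y in Metric.ball x R', ‖y - x‖ ^ s) = (n : ℝ) * mB * (R' ^ 2 / 2) := by
    calc (∫ y in Metric.ball x R', ‖y - x‖ ^ s)
        = ∫ y, (Metric.ball x R').indicator (fun y => ‖y - x‖ ^ s) y :=
          (integral_indicator measurableSet_ball).symm
      _ = ∫ y, (Metric.ball (0 : EuclideanSpace ℝ (Fin n)) R').indicator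
            (fun z => ‖z‖ ^ s) (y - x) := by rw [hind]
      _ = ∫ z, (Metric.ball (0 : EuclideanSpace ℝ (Fin n)) R').indicator
            (fun z => ‖z‖ ^ s) z := integral_sub_right_eq_self _ x
      _ = ∫ z in Metric.ball (0 : EuclideanSpace ℝ (Fin n)) R', ‖z‖ ^ s :=
          integral_indicator measurableSet_ball
      _ = (n : ℝ) * mB * (R' ^ 2 / 2) := haux2
  -- the two constant estimates
  have key2 : K * R' ^ q * J = B₂ * R ^ q := by
    rw [hB₂, hR'def, Real.div_rpow hR0.le (by norm_num : (0:ℝ) ≤ 2)]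
    ring
  have key1 : (1 + R) ^ m' * Real.exp (-(c * R')) * ((n : ℝ) * mB * (R' ^ 2 / 2))
      ≤ B₁ * R ^ q := by
    have hRq : R ^ q = (R ^ p)⁻¹ := by rw [hqp, Real.rpow_neg hR0.le]
    rw [hRq, ← div_eq_mul_inv, le_div_iff₀ (Real.rpow_pos_of_pos hR0 p)]
    have big : (1 + R) ^ m' * R ^ (2:ℕ) * R ^ p ≤ 2 ^ k * R ^ k := by
      have c1 : (1 + R) ^ m' ≤ (2 * R) ^ m' :=
        Real.rpow_le_rpow (by linarith) (by linarith) hm'0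
      have c2 : R ^ (2:ℕ) = R ^ (((2:ℕ)):ℝ) := (Real.rpow_natCast R 2).symm
      have c3 : R ^ (((2:ℕ)):ℝ) ≤ (2 * R) ^ (((2:ℕ)):ℝ) :=
        Real.rpow_le_rpow hR0.le (by linarith) (by norm_num)
      have c4 : R ^ p ≤ (2 * R) ^ p := Real.rpow_le_rpow hR0.le (by linarith) hp0
      have c5 : (2*R) ^ m' * (2*R) ^ (((2:ℕ)):ℝ) * (2*R) ^ p
          = (2*R) ^ (m' + ((2:ℕ):ℝ) + p) := by
        rw [Real.rpow_add (by linarith), Real.rpow_add (by linarith)]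
      have c6 : (2*R) ^ (m' + ((2:ℕ):ℝ) + p) ≤ (2*R) ^ ((k:ℝ)) := by
        refine Real.rpow_le_rpow_of_exponent_le (by linarith) ?_
        have hm'le : m' ≤ (n:ℝ)/2 := by
          apply max_le
          · rw [hm3]; linarith
          · linarith
        rw [hkdef, hp]
        push_cast
        linarith
      have c7 : (2*R) ^ ((k:ℝ)) = 2 ^ k * R ^ k := by rw [Real.rpow_natCast, mul_pow]
      calc (1 + R) ^ m' * R ^ (2:ℕ) * R ^ p
          ≤ (2*R) ^ m' * (2*R) ^ (((2:ℕ)):ℝ) * (2*R) ^ p := by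
            rw [c2]
            exact mul_le_mul (mul_le_mul c1 c3 (by positivity) (by positivity)) c4
              (by positivity) (by positivity)
        _ = (2*R) ^ (m' + ((2:ℕ):ℝ) + p) := c5
        _ ≤ (2*R) ^ ((k:ℝ)) := c6
        _ = 2 ^ k * R ^ k := c7
    have e8 : R ^ k * Real.exp (-(c * R')) ≤ (k.factorial : ℝ) * (2 / c) ^ k := by
      have hb0 : (0:ℝ) ≤ c * R' := by positivity
      have base : (c * R') ^ k ≤ (k.factorial : ℝ) * Real.exp (c * R') := by
        have h := Real.pow_div_factorial_le_exp _ hb0 k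
        rw [div_le_iff₀ (by positivity : (0:ℝ) < (k.factorial : ℝ))] at h
        linarith [h]
      have hRk : R ^ k = (2 / c) ^ k * (c * R') ^ k := by
        rw [← mul_pow]
        congr 1
        rw [hR'def]
        field_simp
      calc R ^ k * Real.exp (-(c * R'))
          = (2/c)^k * ((c*R')^k * Real.exp (-(c * R'))) := by rw [hRk]; ring
        _ ≤ (2/c)^k * ((k.factorial : ℝ) * Real.exp (c * R') * Real.exp (-(c * R'))) := by
            refine mul_le_mul_of_nonneg_left ?_ (by positivity)
            exact mul_le_mul_of_nonneg_right base (Real.exp_pos _).le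
        _ = (2/c)^k * (k.factorial : ℝ) := by
            rw [mul_assoc, ← Real.exp_add]
            simp
        _ = (k.factorial : ℝ) * (2/c)^k := by ring
    have hR'2 : R' ^ 2 / 2 = R ^ (2:ℕ) / 8 := by rw [hR'def]; ring
    calc (1 + R) ^ m' * Real.exp (-(c * R')) * ((n:ℝ) * mB * (R' ^ 2 / 2)) * R ^ p
        = ((1 + R) ^ m' * R ^ (2:ℕ) * R ^ p) * Real.exp (-(c * R')) * ((n:ℝ) * mB / 8) := by
          rw [hR'2]; ring
      _ ≤ (2 ^ k * R ^ k) * Real.exp (-(c * R')) * ((n:ℝ) * mB / 8) := by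
          refine mul_le_mul_of_nonneg_right
            (mul_le_mul_of_nonneg_right big (Real.exp_pos _).le) ?_
          positivity
      _ = (R ^ k * Real.exp (-(c * R'))) * (2 ^ k * ((n:ℝ) * mB / 8)) := by ring
      _ ≤ ((k.factorial : ℝ) * (2 / c) ^ k) * (2 ^ k * ((n:ℝ) * mB / 8)) := by
          refine mul_le_mul_of_nonneg_right e8 ?_
          positivity
      _ = B₁ := by rw [hB₁]; ring
  -- final chain
  calc (∫ y : EuclideanSpace ℝ (Fin n), g ‖y - x‖ * Real.exp (-b * ‖y‖))
      ≤ ∫ y : EuclideanSpace ℝ (Fin n),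
          (A₁ * (Metric.ball x R').indicator (fun y => ‖y - x‖ ^ s) y
            + A₂ * Real.exp (-c * ‖y‖)) :=
        integral_mono_of_nonneg hf0 ((hFi1.const_mul A₁).add (hJint.const_mul A₂)) hfF
    _ = A₁ * (∫ y in Metric.ball x R', ‖y - x‖ ^ s) + A₂ * J := by
        rw [integral_add (hFi1.const_mul A₁) (hJint.const_mul A₂),
          integral_const_mul, integral_const_mul, integral_indicator measurableSet_ball,
          ← hJdef]
    _ = (C * Real.exp (-R)) * ((1 + R) ^ m' * Real.exp (-(c * R')) * ((n:ℝ) * mB * (R' ^ 2 / 2)))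
        + (C * Real.exp (-R)) * (K * R' ^ q * J) := by rw [hI, hA₁, hA₂]; ring
    _ ≤ (C * Real.exp (-R)) * (B₁ * R ^ q) + (C * Real.exp (-R)) * (B₂ * R ^ q) := by
        have h0 : (0:ℝ) ≤ C * Real.exp (-R) := by positivity
        exact add_le_add (mul_le_mul_of_nonneg_left key1 h0)
          (mul_le_mul_of_nonneg_left (le_of_eq key2) h0)
    _ = C * (B₁ + B₂) * R ^ q * Real.exp (-R) := by ring
end

section
/- Let N ≥ 3 and let I(x) = ∫_{ℝ^{N-1}} e^{-‖x - y‖ - ‖y‖}·(1 + ‖x - y‖)^{(N-4)/2}/‖x - y‖^{N-3} dy. Then there is a constant C > 0 such that I(x) ≤ C·e^{-‖x‖}·‖x‖^{N/2} for all x with ‖x‖ ≥ 1. -/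
open Real MeasureTheory Set Metric
open scoped ENNReal

lemma lintegral_fun_norm_addHaar' {E : Type*} [NormedAddCommGroup E] [NormedSpace ℝ E]
    [MeasurableSpace E] [BorelSpace E] [FiniteDimensional ℝ E] [Nontrivial E]
    (μ : Measure E) [μ.IsAddHaarMeasure] (F : ℝ → ℝ≥0∞) (hF : Measurable F) :
    ∫⁻ x, F ‖x‖ ∂μ = μ.toSphere Set.univ *
      ∫⁻ y in Set.Ioi (0 : ℝ), ENNReal.ofReal (y ^ (Module.finrank ℝ E - 1)) * F y := by
  have hFm : Measurable fun p : sphere (0 : E) 1 × Set.Ioi (0 : ℝ) => F p.2 :=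
    hF.comp (measurable_subtype_coe.comp measurable_snd)
  have hFq : Measurable fun q : Set.Ioi (0 : ℝ) => F q :=
    hF.comp measurable_subtype_coe
  have h4 : ∫⁻ q : Set.Ioi (0:ℝ), F q ∂(Measure.volumeIoiPow (Module.finrank ℝ E - 1))
      = ∫⁻ y in Set.Ioi (0 : ℝ), ENNReal.ofReal (y ^ (Module.finrank ℝ E - 1)) * F y := by
    rw [Measure.volumeIoiPow,
      lintegral_withDensity_eq_lintegral_mul _ (by fun_prop) hFq,
      ← lintegral_subtype_comap measurableSet_Ioi
        (fun y : ℝ => ENNReal.ofReal (y ^ (Module.finrank ℝ E - 1)) * F y)]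
    rfl
  calc
    ∫⁻ x, F ‖x‖ ∂μ = ∫⁻ x : ({(0 : E)}ᶜ : Set E), F ‖x.1‖ ∂(μ.comap (↑)) := by
      rw [lintegral_subtype_comap (measurableSet_singleton _).compl (fun x => F ‖x‖),
        restrict_compl_singleton]
    _ = ∫⁻ p : sphere (0 : E) 1 × Set.Ioi (0 : ℝ), F p.2
          ∂(μ.toSphere.prod (.volumeIoiPow (Module.finrank ℝ E - 1))) :=
      by simpa using μ.measurePreserving_homeomorphUnitSphereProd.lintegral_comp hFm
    _ = μ.toSphere Set.univ *
          ∫⁻ q : Set.Ioi (0:ℝ), F q ∂(Measure.volumeIoiPow (Module.finrank ℝ E - 1)) := by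
      rw [MeasureTheory.lintegral_prod (fun p : sphere (0 : E) 1 × Set.Ioi (0 : ℝ) => F p.2)
        hFm.aemeasurable]
      simp [lintegral_const, mul_comm]
    _ = _ := by rw [h4]

lemma key_ineq (a s : ℝ) (hs : 0 ≤ s) {r u v : ℝ} (hr : 1 ≤ r) (hu : 0 < u) (hv : 0 ≤ v)
    (htri : r ≤ u + v) :
    Real.exp (-u - v) * (1 + u) ^ a / u ^ s ≤
      (max 1 (2 * max a 0)) ^ (max a 0) * (Real.exp (-r) * (1 + r) ^ (max a 0) *
        ((Set.Ioc (0:ℝ) (2*r)).indicator (fun w => w ^ (-(s - min a 0))) u +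
          Real.exp (-(4⁻¹ * u)))) := by
  set a' := max a 0 with ha'
  set a'' := min a 0 with ha''
  set c := max 1 (2 * a') with hc
  set t := u + v - r with htdef
  have ha'0 : 0 ≤ a' := le_max_right _ _
  have ha''0 : a'' ≤ 0 := min_le_right _ _
  have ht : 0 ≤ t := by simp only [htdef]; linarith
  have h1u : (0:ℝ) < 1 + u := by linarith
  have hc1 : (1:ℝ) ≤ c := le_max_left _ _
  have hc0 : (0:ℝ) < c := by linarith
  have hca : 2 * a' ≤ c := le_max_right _ _
  -- split (1+u)^a
  have hsplit : (1 + u) ^ a = (1 + u) ^ a' * (1 + u) ^ a'' := by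
    rw [← Real.rpow_add h1u, ha', ha'', max_add_min, add_zero]
  -- bound (1+u)^{a''} / u^s ≤ u^{-(s-a'')}
  have h2 : (1 + u) ^ a'' ≤ u ^ a'' :=
    Real.rpow_le_rpow_of_nonpos hu (by linarith) ha''0
  have h3 : u ^ a'' / u ^ s = u ^ (-(s - a'')) := by
    rw [← Real.rpow_sub hu]; ring_nf
  -- bound (1+u)^{a'}
  have h4 : (1 + u) ^ a' ≤ (1 + r) ^ a' * (1 + t) ^ a' := by
    rw [← Real.mul_rpow (by linarith) (by linarith)]
    apply Real.rpow_le_rpow h1u.le _ ha'0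
    nlinarith
  have h5 : (1 + t) ^ a' ≤ c ^ a' * Real.exp (t / 2) := by
    have h51 : 1 + t ≤ c * (1 + t / c) := by
      have : c * (1 + t / c) = c + t := by field_simp
      rw [this]; linarith
    have h52 : (1 + t) ^ a' ≤ (c * (1 + t / c)) ^ a' :=
      Real.rpow_le_rpow (by linarith) h51 ha'0
    have h53 : (c * (1 + t / c)) ^ a' = c ^ a' * (1 + t / c) ^ a' :=
      Real.mul_rpow hc0.le (by positivity)
    have h54 : (1 + t / c) ^ a' ≤ (Real.exp (t / c)) ^ a' :=
      Real.rpow_le_rpow (by positivity) (Real.add_one_le_exp _ |>.trans_eq' (by ring)) ha'0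
    have h55 : (Real.exp (t / c)) ^ a' = Real.exp (t / c * a') := (Real.exp_mul _ _).symm
    have h56 : Real.exp (t / c * a') ≤ Real.exp (t / 2) := by
      apply Real.exp_le_exp.2
      rw [div_mul_eq_mul_div, div_le_div_iff₀ hc0 two_pos]
      nlinarith
    calc (1 + t) ^ a' ≤ c ^ a' * (1 + t / c) ^ a' := by rw [← h53]; exact h52
      _ ≤ c ^ a' * Real.exp (t / c * a') := by
          rw [← h55]; exact mul_le_mul_of_nonneg_left h54 (by positivity)
      _ ≤ c ^ a' * Real.exp (t / 2) := mul_le_mul_of_nonneg_left h56 (by positivity)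
  have hexp : Real.exp (-u - v) = Real.exp (-r) * Real.exp (-t) := by
    rw [← Real.exp_add]; congr 1; simp only [htdef]; ring
  have hus : (0:ℝ) < u ^ s := Real.rpow_pos_of_pos hu _
  -- main chain
  have main : Real.exp (-u - v) * (1 + u) ^ a / u ^ s ≤
      c ^ a' * Real.exp (-r) * (1 + r) ^ a' * (Real.exp (-(t/2)) * u ^ (-(s - a''))) := by
    rw [hsplit, hexp]
    have expand : Real.exp (-r) * Real.exp (-t) * ((1 + u) ^ a' * (1 + u) ^ a'') / u ^ s
        = Real.exp (-r) * ((1 + u) ^ a' * Real.exp (-t)) * ((1 + u) ^ a'' / u ^ s) := by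
      ring
    rw [expand]
    have b1 : (1 + u) ^ a'' / u ^ s ≤ u ^ (-(s - a'')) := by
      rw [← h3]; gcongr
    have b2 : (1 + u) ^ a' * Real.exp (-t) ≤ (1 + r) ^ a' * (c ^ a' * Real.exp (-(t/2))) := by
      calc (1 + u) ^ a' * Real.exp (-t)
          ≤ ((1 + r) ^ a' * (1 + t) ^ a') * Real.exp (-t) :=
            mul_le_mul_of_nonneg_right h4 (Real.exp_nonneg _)
        _ ≤ ((1 + r) ^ a' * (c ^ a' * Real.exp (t / 2))) * Real.exp (-t) := by
            apply mul_le_mul_of_nonneg_right _ (Real.exp_nonneg _)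
            exact mul_le_mul_of_nonneg_left h5 (by positivity)
        _ = (1 + r) ^ a' * (c ^ a' * Real.exp (-(t/2))) := by
            rw [mul_assoc, mul_assoc, ← Real.exp_add]; ring_nf
    calc Real.exp (-r) * ((1 + u) ^ a' * Real.exp (-t)) * ((1 + u) ^ a'' / u ^ s)
        ≤ Real.exp (-r) * ((1 + r) ^ a' * (c ^ a' * Real.exp (-(t/2)))) * (u ^ (-(s - a''))) := by
          apply mul_le_mul
          · exact mul_le_mul_of_nonneg_left b2 (Real.exp_nonneg _)
          · exact b1
          · positivity
          · positivity
      _ = c ^ a' * Real.exp (-r) * (1 + r) ^ a' * (Real.exp (-(t/2)) * u ^ (-(s - a''))) := by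
          ring
  refine main.trans ?_
  rw [show (max 1 (2 * max a 0)) ^ (max a 0) * (Real.exp (-r) * (1 + r) ^ (max a 0) * _)
      = c ^ a' * Real.exp (-r) * (1 + r) ^ a' *
        ((Set.Ioc (0:ℝ) (2*r)).indicator (fun w => w ^ (-(s - a''))) u +
          Real.exp (-(4⁻¹ * u))) from by rw [ha', ha'', hc]; ring]
  apply mul_le_mul_of_nonneg_left _ (by positivity)
  by_cases hcase : u ≤ 2 * r
  · have hmem : u ∈ Set.Ioc (0:ℝ) (2*r) := ⟨hu, hcase⟩
    rw [Set.indicator_of_mem hmem]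
    have : Real.exp (-(t/2)) ≤ 1 := Real.exp_le_one_iff.2 (by linarith)
    nlinarith [Real.rpow_nonneg hu.le (-(s - a'')), Real.exp_nonneg (-(4⁻¹ * u)),
      Real.rpow_pos_of_pos hu (-(s - a''))]
  · push_neg at hcase
    rw [Set.indicator_of_notMem (by simp [hcase.not_ge])]
    have hu1 : (1:ℝ) ≤ u := by linarith
    have b3 : u ^ (-(s - a'')) ≤ 1 :=
      Real.rpow_le_one_of_one_le_of_nonpos hu1 (by linarith)
    have b4 : Real.exp (-(t/2)) ≤ Real.exp (-(4⁻¹ * u)) := by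
      apply Real.exp_le_exp.2; simp only [htdef]; linarith
    calc Real.exp (-(t/2)) * u ^ (-(s - a''))
        ≤ Real.exp (-(4⁻¹ * u)) * 1 :=
          mul_le_mul b4 b3 (Real.rpow_nonneg hu.le _) (Real.exp_nonneg _)
      _ ≤ 0 + Real.exp (-(4⁻¹ * u)) := by rw [mul_one]; linarith

set_option maxHeartbeats 2000000 in
theorem stmt5 (N : ℕ) (hN : 3 ≤ N) :
    ∃ C > 0, ∀ x : EuclideanSpace ℝ (Fin (N - 1)), 1 ≤ ‖x‖ →
      ∫ y : EuclideanSpace ℝ (Fin (N - 1)),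
          Real.exp (-‖x - y‖ - ‖y‖) * (1 + ‖x - y‖) ^ (((N : ℝ) - 4) / 2) /
            ‖x - y‖ ^ ((N : ℝ) - 3) ≤
        C * Real.exp (-‖x‖) * ‖x‖ ^ ((N : ℝ) / 2) := by
  haveI : Nonempty (Fin (N - 1)) := ⟨⟨0, by omega⟩⟩
  set E := EuclideanSpace ℝ (Fin (N - 1)) with hE
  haveI : Nontrivial E := inferInstance
  have hfin : Module.finrank ℝ E = N - 1 := finrank_euclideanSpace_fin
  have hN3 : (3:ℝ) ≤ (N:ℝ) := by exact_mod_cast hN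
  -- constants
  set a : ℝ := ((N:ℝ) - 4) / 2 with ha
  set a' : ℝ := max a 0 with ha'
  set a'' : ℝ := min a 0 with ha''
  set s : ℝ := (N:ℝ) - 3 with hsdef
  have hs0 : 0 ≤ s := by rw [hsdef]; linarith
  have ha'0 : 0 ≤ a' := le_max_right _ _
  have ha''0 : a'' ≤ 0 := min_le_right _ _
  have ha''half : -2⁻¹ ≤ a'' := by
    rw [ha'']
    have : -2⁻¹ ≤ a := by rw [ha]; linarith
    exact le_min this (by norm_num)
  have hsum : a' + a'' = a := by rw [ha', ha'', max_add_min, add_zero]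
  set K : ℝ := (max 1 (2 * a')) ^ a' with hK
  have hK0 : 0 < K := Real.rpow_pos_of_pos (lt_of_lt_of_le one_pos (le_max_left _ _)) _
  -- the fixed tail integral
  set c₂ : ℝ := ∫ y in Set.Ioi (0:ℝ), y ^ ((N:ℝ) - 2) * Real.exp (-(4⁻¹ * y)) with hc₂
  have hc₂int : IntegrableOn (fun y : ℝ => y ^ ((N:ℝ) - 2) * Real.exp (-(4⁻¹ * y)))
      (Set.Ioi (0:ℝ)) := by
    have := integrableOn_rpow_mul_exp_neg_mul_rpow (p := 1) (s := (N:ℝ) - 2) (b := 4⁻¹)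
      (by linarith) one_pos (by norm_num)
    refine this.congr_fun (fun y hy => ?_) measurableSet_Ioi
    simp only [Real.rpow_one]
    ring_nf
  have hc₂0 : 0 ≤ c₂ := by
    rw [hc₂]
    refine setIntegral_nonneg measurableSet_Ioi fun y hy => ?_
    have : (0:ℝ) < y := hy
    positivity
  set T : ℝ≥0∞ := (volume : Measure E).toSphere Set.univ with hT
  have hTne : T ≠ ∞ := measure_ne_top _ _
  set T' : ℝ := T.toReal with hT'
  have hT'0 : 0 ≤ T' := ENNReal.toReal_nonneg
  refine ⟨max 1 (K * 2 ^ a' * T' * (4 + c₂)), lt_of_lt_of_le one_pos (le_max_left _ _),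
    fun x hr => ?_⟩
  set r : ℝ := ‖x‖ with hrdef
  have hr0 : (0:ℝ) < r := lt_of_lt_of_le one_pos hr
  -- the radial bound function
  set H : ℝ → ℝ := fun w => (Set.Ioc (0:ℝ) (2*r)).indicator (fun w => w ^ (-(s - a''))) w +
    Real.exp (-(4⁻¹ * w)) with hHdef
  have hH0 : ∀ w, 0 ≤ H w := by
    intro w
    refine add_nonneg (Set.indicator_nonneg (fun w hw => ?_) _) (Real.exp_nonneg _)
    exact Real.rpow_nonneg hw.1.le _
  have hHmeas : Measurable fun w : ℝ => ENNReal.ofReal (H w) := by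
    apply ENNReal.measurable_ofReal.comp
    apply Measurable.add
    · exact Measurable.indicator (by fun_prop) measurableSet_Ioc
    · fun_prop
  -- the integrand
  set F : E → ℝ := fun y => Real.exp (-‖x - y‖ - ‖y‖) * (1 + ‖x - y‖) ^ a / ‖x - y‖ ^ s
    with hFdef
  have hF0 : ∀ y, 0 ≤ F y := by
    intro y
    have h1 : (0:ℝ) < 1 + ‖x - y‖ := by positivity
    positivity
  have hFmeas : AEStronglyMeasurable F (volume : Measure E) := by
    apply Measurable.aestronglyMeasurable
    fun_prop
  -- Step B : Bochner integral = toReal of lintegral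
  have hBochner : ∫ y, F y = (∫⁻ y, ENNReal.ofReal (F y)).toReal :=
    integral_eq_lintegral_of_nonneg_ae (Filter.Eventually.of_forall hF0) hFmeas
  -- Step C : a.e. pointwise bound
  have hae : ∀ᵐ y : E, ENNReal.ofReal (F y) ≤
      ENNReal.ofReal (K * (Real.exp (-r) * (1 + r) ^ a')) * ENNReal.ofReal (H ‖x - y‖) := by
    have hne : ∀ᵐ y : E, y ≠ x := by
      rw [Filter.eventually_iff, mem_ae_iff]
      have : {y : E | y ≠ x}ᶜ = {x} := by ext y; simp [Set.mem_setOf_eq]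
      rw [this]
      exact measure_singleton _
    filter_upwards [hne] with y hy
    have hu : 0 < ‖x - y‖ := by
      rw [norm_pos_iff]
      exact sub_ne_zero.2 (Ne.symm hy)
    have htri : r ≤ ‖x - y‖ + ‖y‖ := by
      calc r = ‖(x - y) + y‖ := by rw [sub_add_cancel]
        _ ≤ ‖x - y‖ + ‖y‖ := norm_add_le _ _
    have key := key_ineq a s hs0 hr hu (norm_nonneg y) htri
    rw [← ENNReal.ofReal_mul (by positivity)]
    refine ENNReal.ofReal_le_ofReal ?_
    calc F y ≤ (max 1 (2 * max a 0)) ^ (max a 0) * (Real.exp (-r) * (1 + r) ^ (max a 0) *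
          ((Set.Ioc (0:ℝ) (2*r)).indicator (fun w => w ^ (-(s - min a 0))) ‖x - y‖ +
            Real.exp (-(4⁻¹ * ‖x - y‖)))) := key
      _ = K * (Real.exp (-r) * (1 + r) ^ a') * H ‖x - y‖ := by
          rw [hK, hHdef, ha', ha'']; ring
  -- Step D : lintegral chain
  have hDchain : (∫⁻ y, ENNReal.ofReal (F y)) ≤
      ENNReal.ofReal (K * (Real.exp (-r) * (1 + r) ^ a')) *
        (T * ∫⁻ y in Set.Ioi (0:ℝ), ENNReal.ofReal (y ^ (N - 2)) * ENNReal.ofReal (H y)) := by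
    calc (∫⁻ y, ENNReal.ofReal (F y))
        ≤ ∫⁻ y, ENNReal.ofReal (K * (Real.exp (-r) * (1 + r) ^ a')) *
            ENNReal.ofReal (H ‖x - y‖) := lintegral_mono_ae hae
      _ = ENNReal.ofReal (K * (Real.exp (-r) * (1 + r) ^ a')) *
            ∫⁻ y, ENNReal.ofReal (H ‖x - y‖) :=
          lintegral_const_mul' _ _ ENNReal.ofReal_ne_top
      _ = ENNReal.ofReal (K * (Real.exp (-r) * (1 + r) ^ a')) *
            ∫⁻ z, ENNReal.ofReal (H ‖z‖) := by
          congr 1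
          exact (Measure.measurePreserving_sub_left (volume : Measure E) x).lintegral_comp
            (hHmeas.comp measurable_norm)
      _ = ENNReal.ofReal (K * (Real.exp (-r) * (1 + r) ^ a')) *
            (T * ∫⁻ y in Set.Ioi (0:ℝ), ENNReal.ofReal (y ^ (N - 2)) * ENNReal.ofReal (H y)) := by
          rw [lintegral_fun_norm_addHaar' (volume : Measure E) _ hHmeas, hfin,
            show N - 1 - 1 = N - 2 from by omega]
  -- Step E : 1D integral bound
  have hcast : ((N - 2 : ℕ) : ℝ) = (N:ℝ) - 2 := by
    have h2N : (2:ℕ) ≤ N := by omega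
    rw [Nat.cast_sub h2N]; norm_num
  have h02r : (0:ℝ) ≤ 2 * r := by linarith
  have hq : (-1:ℝ) < 1 + a'' := by linarith
  have hE1D : (∫⁻ y in Set.Ioi (0:ℝ), ENNReal.ofReal (y ^ (N - 2)) * ENNReal.ofReal (H y))
      ≤ ENNReal.ofReal (4 * r ^ (2 + a'')) + ENNReal.ofReal c₂ := by
    have hsplitH : ∀ y ∈ Set.Ioi (0:ℝ),
        ENNReal.ofReal (y ^ (N - 2)) * ENNReal.ofReal (H y) =
        (Set.Ioc (0:ℝ) (2*r)).indicator (fun w => ENNReal.ofReal (w ^ (1 + a''))) y +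
          ENNReal.ofReal (y ^ ((N:ℝ) - 2) * Real.exp (-(4⁻¹ * y))) := by
      intro y hy
      have hy0 : (0:ℝ) < y := hy
      have hpow : (y : ℝ) ^ (N - 2 : ℕ) = y ^ ((N:ℝ) - 2) := by
        rw [← Real.rpow_natCast y (N-2), hcast]
      have hind0 : 0 ≤ (Set.Ioc (0:ℝ) (2*r)).indicator (fun w => w ^ (-(s - a''))) y :=
        Set.indicator_nonneg (fun w hw => Real.rpow_nonneg hw.1.le _) _
      rw [hHdef]
      simp only []
      rw [ENNReal.ofReal_add hind0 (Real.exp_nonneg _), mul_add]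
      congr 1
      · by_cases hmem : y ∈ Set.Ioc (0:ℝ) (2*r)
        · rw [Set.indicator_of_mem hmem, Set.indicator_of_mem hmem,
            ← ENNReal.ofReal_mul (by positivity), hpow, ← Real.rpow_add hy0]
          congr 2
          rw [hsdef]; ring
        · rw [Set.indicator_of_notMem hmem, Set.indicator_of_notMem hmem]
          simp
      · rw [← ENNReal.ofReal_mul (by positivity), hpow]
    rw [setLIntegral_congr_fun measurableSet_Ioi (fun x hx => hsplitH x hx)]
    rw [lintegral_add_left (Measurable.indicator (by fun_prop) measurableSet_Ioc)]
    have hI1 : (∫⁻ y in Set.Ioi (0:ℝ),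
        (Set.Ioc (0:ℝ) (2*r)).indicator (fun w => ENNReal.ofReal (w ^ (1 + a''))) y)
        ≤ ENNReal.ofReal (4 * r ^ (2 + a'')) := by
      rw [lintegral_indicator measurableSet_Ioc, Measure.restrict_restrict measurableSet_Ioc,
        Set.inter_eq_self_of_subset_left Set.Ioc_subset_Ioi_self]
      have hint : IntegrableOn (fun y : ℝ => y ^ (1 + a'')) (Set.Ioc (0:ℝ) (2*r)) :=
        (intervalIntegrable_iff_integrableOn_Ioc_of_le h02r).mp
          (intervalIntegral.intervalIntegrable_rpow' hq)
      rw [← ofReal_integral_eq_lintegral_ofReal hint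
        ((ae_restrict_iff' measurableSet_Ioc).2
          (Filter.Eventually.of_forall (fun y hy => Real.rpow_nonneg hy.1.le _)))]
      apply ENNReal.ofReal_le_ofReal
      have hval : ∫ y in Set.Ioc (0:ℝ) (2*r), y ^ (1 + a'')
          = (2*r) ^ (2 + a'') / (2 + a'') := by
        rw [← intervalIntegral.integral_of_le h02r,
          integral_rpow (Or.inl hq), Real.zero_rpow (by linarith)]
        rw [show (1 + a'' + 1) = 2 + a'' from by ring]
        ring
      rw [hval]
      have hb1 : (2*r) ^ (2 + a'') ≤ 4 * r ^ (2 + a'') := by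
        rw [Real.mul_rpow (by norm_num) hr0.le]
        have : (2:ℝ) ^ (2 + a'') ≤ 2 ^ (2:ℝ) := by
          apply Real.rpow_le_rpow_of_exponent_le one_le_two (by linarith)
        have h4 : (2:ℝ) ^ (2:ℝ) = 4 := by
          rw [show (2:ℝ) = ((2:ℕ):ℝ) from by norm_num, Real.rpow_natCast]; norm_num
        nlinarith [Real.rpow_nonneg hr0.le (2 + a'')]
      calc (2*r) ^ (2 + a'') / (2 + a'') ≤ (2*r) ^ (2 + a'') / 1 := by
            apply div_le_div_of_nonneg_left (Real.rpow_nonneg h02r _) one_pos (by linarith)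
        _ = (2*r) ^ (2 + a'') := by ring
        _ ≤ 4 * r ^ (2 + a'') := hb1
    have hI2 : (∫⁻ y in Set.Ioi (0:ℝ),
        ENNReal.ofReal (y ^ ((N:ℝ) - 2) * Real.exp (-(4⁻¹ * y)))) = ENNReal.ofReal c₂ := by
      rw [← ofReal_integral_eq_lintegral_ofReal hc₂int
        ((ae_restrict_iff' measurableSet_Ioi).2
          (Filter.Eventually.of_forall (fun y hy => by
            have : (0:ℝ) < y := hy
            positivity)))]
    exact add_le_add hI1 (le_of_eq hI2)
  -- Step F : combine
  have hfinal : (∫⁻ y, ENNReal.ofReal (F y)) ≤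
      ENNReal.ofReal (max 1 (K * 2 ^ a' * T' * (4 + c₂)) * Real.exp (-r) * r ^ ((N:ℝ)/2)) := by
    refine hDchain.trans ?_
    have hTX : T * (∫⁻ y in Set.Ioi (0:ℝ), ENNReal.ofReal (y ^ (N - 2)) * ENNReal.ofReal (H y))
        ≤ ENNReal.ofReal T' * ENNReal.ofReal (4 * r ^ (2 + a'') + c₂) := by
      rw [hT', ENNReal.ofReal_toReal hTne,
        ENNReal.ofReal_add (by positivity) hc₂0]
      exact mul_le_mul_right hE1D _
    calc ENNReal.ofReal (K * (Real.exp (-r) * (1 + r) ^ a')) *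
          (T * ∫⁻ y in Set.Ioi (0:ℝ), ENNReal.ofReal (y ^ (N - 2)) * ENNReal.ofReal (H y))
        ≤ ENNReal.ofReal (K * (Real.exp (-r) * (1 + r) ^ a')) *
            (ENNReal.ofReal T' * ENNReal.ofReal (4 * r ^ (2 + a'') + c₂)) :=
          mul_le_mul_right hTX _
      _ = ENNReal.ofReal (K * (Real.exp (-r) * (1 + r) ^ a') *
            (T' * (4 * r ^ (2 + a'') + c₂))) := by
          rw [← ENNReal.ofReal_mul hT'0, ← ENNReal.ofReal_mul (by positivity)]
      _ ≤ ENNReal.ofReal (max 1 (K * 2 ^ a' * T' * (4 + c₂)) * Real.exp (-r) *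
            r ^ ((N:ℝ)/2)) := by
          apply ENNReal.ofReal_le_ofReal
          have e1 : (1 + r) ^ a' ≤ 2 ^ a' * r ^ a' := by
            rw [← Real.mul_rpow (by norm_num) hr0.le]
            exact Real.rpow_le_rpow (by linarith) (by linarith) ha'0
          have e2 : 4 * r ^ (2 + a'') + c₂ ≤ (4 + c₂) * r ^ (2 + a'') := by
            have h1r : (1:ℝ) ≤ r ^ (2 + a'') := by
              have := Real.rpow_le_rpow_of_exponent_le hr
                (show (0:ℝ) ≤ 2 + a'' from by linarith)
              rwa [Real.rpow_zero] at this
            nlinarith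
          have e3 : r ^ a' * r ^ (2 + a'') = r ^ ((N:ℝ)/2) := by
            rw [← Real.rpow_add hr0]
            congr 1
            have : a' + a'' = ((N:ℝ) - 4) / 2 := by rw [hsum, ha]
            linarith
          calc K * (Real.exp (-r) * (1 + r) ^ a') * (T' * (4 * r ^ (2 + a'') + c₂))
              ≤ K * (Real.exp (-r) * (2 ^ a' * r ^ a')) * (T' * ((4 + c₂) * r ^ (2 + a''))) := by
                gcongr
            _ = (K * 2 ^ a' * T' * (4 + c₂)) * Real.exp (-r) * (r ^ a' * r ^ (2 + a'')) := by
                ring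
            _ = (K * 2 ^ a' * T' * (4 + c₂)) * Real.exp (-r) * r ^ ((N:ℝ)/2) := by rw [e3]
            _ ≤ max 1 (K * 2 ^ a' * T' * (4 + c₂)) * Real.exp (-r) * r ^ ((N:ℝ)/2) := by
                have hc : (K * 2 ^ a' * T' * (4 + c₂)) ≤ max 1 (K * 2 ^ a' * T' * (4 + c₂)) :=
                  le_max_right _ _
                have hpos : (0:ℝ) ≤ Real.exp (-r) * r ^ ((N:ℝ)/2) := by positivity
                nlinarith
  -- Step G : conclude
  calc ∫ y, F y = (∫⁻ y, ENNReal.ofReal (F y)).toReal := hBochner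
    _ ≤ (ENNReal.ofReal (max 1 (K * 2 ^ a' * T' * (4 + c₂)) * Real.exp (-r) *
          r ^ ((N:ℝ)/2))).toReal := ENNReal.toReal_mono ENNReal.ofReal_ne_top hfinal
    _ = max 1 (K * 2 ^ a' * T' * (4 + c₂)) * Real.exp (-r) * r ^ ((N:ℝ)/2) :=
        ENNReal.toReal_ofReal (by positivity)
end

section
/- Let p > 1 and let z : ℝ → ℝ be a bounded, positive, nonconstant C² solution of z'' = z - z^p which is periodic. Then z - 1 has infinitely many zeros; moreover z attains values both strictly above and strictly below 1. -/
open Real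

lemma aux_const (z : ℝ → ℝ) (T : ℝ) (hT : 0 < T) (hper : Function.Periodic z T)
    (hC2 : ContDiff ℝ 2 z) (h2 : ∀ t, 0 ≤ deriv (deriv z) t) : ∃ k, ∀ t, z t = k := by
  have h21 : ContDiff ℝ (1+1 : WithTop ℕ∞) z := by norm_num; exact hC2
  have hdz : Differentiable ℝ z := (contDiff_succ_iff_deriv.mp h21).1
  have hdz' : Differentiable ℝ (deriv z) := (contDiff_succ_iff_deriv.mp h21).2.2.differentiable (by norm_num)
  have hmono : Monotone (deriv z) := monotone_of_deriv_nonneg hdz' h2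
  -- deriv z is periodic
  have hperd : Function.Periodic (deriv z) T := by
    intro x
    have : (fun y => z (y + T)) = z := funext fun y => hper y
    calc deriv z (x + T) = deriv (fun y => z (y + T)) x := (deriv_comp_add_const z T x).symm
    _ = deriv z x := by rw [this]
  -- monotone + periodic ⇒ constant
  have hconst : ∀ s t : ℝ, deriv z t ≤ deriv z s := by
    intro s t
    obtain ⟨n, hn⟩ := exists_nat_ge ((t - s) / T)
    have hle : t - n * T ≤ s := by
      have := (div_le_iff₀ hT).mp hn
      linarith
    calc deriv z t = deriv z (t - n * T) := (hperd.sub_nat_mul_eq n).symm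
    _ ≤ deriv z s := hmono hle
  have hceq : ∀ t, deriv z t = deriv z 0 := fun t => le_antisymm (hconst 0 t) (hconst t 0)
  -- Rolle ⇒ deriv z 0 = 0
  obtain ⟨c, _, hc⟩ := exists_deriv_eq_zero (f := z) hT
    (hdz.continuous.continuousOn) (by simpa using (hper 0).symm)
  have hzero : ∀ t, deriv z t = 0 := fun t => by rw [hceq t, ← hceq c, hc]
  exact ⟨z 0, fun t => is_const_of_deriv_eq_zero hdz hzero t 0⟩

theorem stmt9 (p : ℝ) (hp : 1 < p) (z : ℝ → ℝ) (hC2 : ContDiff ℝ 2 z)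
    (hbdd : ∃ M, ∀ t, |z t| ≤ M) (hpos : ∀ t, 0 < z t)
    (hnonconst : ¬ ∃ k, ∀ t, z t = k)
    (hper : ∃ T > 0, Function.Periodic z T)
    (hode : ∀ t, deriv (deriv z) t = z t - z t ^ p) :
    {t : ℝ | z t = 1}.Infinite ∧ (∃ t, 1 < z t) ∧ (∃ t, z t < 1) := by
  obtain ⟨T, hT, hperz⟩ := hper
  have habove : ∃ t, 1 < z t := by
    by_contra h
    push_neg at h
    refine hnonconst (aux_const z T hT hperz hC2 fun t => ?_)
    rw [hode t]
    have : z t ^ p ≤ z t ^ (1:ℝ) :=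
      Real.rpow_le_rpow_of_exponent_ge (hpos t) (h t) hp.le
    rw [Real.rpow_one] at this
    linarith
  have hbelow : ∃ t, z t < 1 := by
    by_contra h
    push_neg at h
    have hC2n : ContDiff ℝ 2 (fun t => -z t) := hC2.neg
    have hpern : Function.Periodic (fun t => -z t) T := fun x => by simp [hperz x]
    have key : ∀ t, 0 ≤ deriv (deriv fun t => -z t) t := by
      intro t
      have hd : (deriv fun t => -z t) = fun t => -deriv z t := funext fun x => deriv.neg
      rw [hd]
      have : deriv (fun t => -deriv z t) t = -deriv (deriv z) t := deriv.neg
      rw [this, hode t]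
      have h1 : z t ^ (1:ℝ) ≤ z t ^ p :=
        Real.rpow_le_rpow_of_exponent_le (h t) hp.le
      rw [Real.rpow_one] at h1
      linarith
    obtain ⟨k, hk⟩ := aux_const _ T hT hpern hC2n key
    exact hnonconst ⟨-k, fun t => by have := hk t; linarith⟩
  obtain ⟨a, ha⟩ := habove
  obtain ⟨b, hb⟩ := hbelow
  have hcont : Continuous z := hC2.continuous
  obtain ⟨c, hc⟩ := intermediate_value_univ b a hcont ⟨hb.le, ha.le⟩
  refine ⟨?_, ⟨a, ha⟩, ⟨b, hb⟩⟩
  apply Set.infinite_of_injective_forall_mem (f := fun n : ℕ => c + n * T)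
  · intro m n hmn
    simp only at hmn
    have : (m : ℝ) = n := by
      rcases mul_eq_mul_right_iff.mp (add_left_cancel hmn) with h | h
      · exact h
      · exact absurd h hT.ne'
    exact_mod_cast this
  · intro n
    show z (c + n * T) = 1
    have := (hperz.nat_mul n) c
    rw [this, hc]
end

section
/- Let c > 0 and p > 1, and suppose u : ℝ² → ℝ is a bounded positive C² solution of -c·Δu + u - u^p = 0 on ℝ² such that ∂u/∂x₂ ≤ 0 everywhere and ∂u/∂x₂ is bounded, and u has the one-dimensional symmetry u(x) = U(a·x) for some unit vector a ∈ ℝ² and some C² function U : ℝ → ℝ. If a₂ ≠ 0 then u is constant, equal to 0 or 1. -/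
open Real

open Filter


lemma myContDiffDeriv {f : ℝ → ℝ} (hf : ContDiff ℝ 2 f) : ContDiff ℝ 1 (deriv f) := by
  have h : ContDiff ℝ (1 + 1) f := by norm_num; exact hf
  exact (contDiff_succ_iff_deriv.mp h).2.2

lemma lineDeriv1 {f : ℝ → ℝ} (hf : Differentiable ℝ f) (k b : ℝ) :
    deriv (fun s => f (k * s + b)) = fun s => deriv f (k * s + b) * k := by
  funext s
  have h1 : HasDerivAt (fun s : ℝ => k * s + b) k s := by
    simpa using ((hasDerivAt_id s).const_mul k).add_const b
  exact (((hf _).hasDerivAt).comp s h1).deriv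

lemma lineDeriv2 {f : ℝ → ℝ} (hf : ContDiff ℝ 2 f) (k b : ℝ) :
    deriv (deriv (fun s => f (k * s + b))) = fun s => deriv (deriv f) (k * s + b) * (k * k) := by
  have hd : Differentiable ℝ f := hf.differentiable (by norm_num)
  have hd' : Differentiable ℝ (deriv f) := (myContDiffDeriv hf).differentiable (by norm_num)
  rw [lineDeriv1 hd k b]
  funext s
  have h1 : HasDerivAt (fun s : ℝ => k * s + b) k s := by
    simpa using ((hasDerivAt_id s).const_mul k).add_const b
  have h2 : HasDerivAt (fun s => deriv f (k * s + b))
      (deriv (deriv f) (k * s + b) * k) s := ((hd' _).hasDerivAt).comp s h1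
  have := (h2.mul_const k).deriv
  rw [this]; ring

lemma negDeriv1 {f : ℝ → ℝ} (hf : Differentiable ℝ f) :
    deriv (fun t => f (-t)) = fun t => -deriv f (-t) := by
  have := lineDeriv1 hf (-1) 0
  simp only [neg_one_mul, add_zero] at this
  rw [this]; funext t; ring

lemma negDeriv2 {f : ℝ → ℝ} (hf : ContDiff ℝ 2 f) :
    deriv (deriv (fun t => f (-t))) = fun t => deriv (deriv f) (-t) := by
  have := lineDeriv2 hf (-1) 0
  simp only [neg_one_mul, add_zero] at this
  rw [this]; funext t; ring

lemma rootLemma {p L : ℝ} (hp : 1 < p) (hL0 : 0 ≤ L) (h : L = L ^ p) : L = 0 ∨ L = 1 := by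
  rcases eq_or_lt_of_le hL0 with h0 | h0
  · exact Or.inl h0.symm
  · right
    have hlog : Real.log (L ^ p) = Real.log L := by rw [← h]
    rw [Real.log_rpow h0] at hlog
    have : Real.log L = 0 := by nlinarith
    rcases (Real.log_eq_zero).mp this with h' | h' | h' <;> linarith

lemma tailLemma (c p : ℝ) (hc : 0 < c) (hp : 1 < p) (U : ℝ → ℝ)
    (hU : ContDiff ℝ 2 U)
    (hode : ∀ t, c * deriv (deriv U) t = U t - U t ^ p)
    (hpos : ∀ t, 0 < U t)
    (hsign : (∀ t, deriv U t ≤ 0) ∨ (∀ t, 0 ≤ deriv U t))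
    (L : ℝ) (hL : Filter.Tendsto U atTop (nhds L)) :
    L = L ^ p ∧
      c / 2 * (deriv U 0) ^ 2 - (U 0) ^ 2 / 2 + (U 0) ^ (p + 1) / (p + 1)
        = -(L ^ 2 / 2) + L ^ (p + 1) / (p + 1) := by
  have hUd : Differentiable ℝ U := hU.differentiable (by norm_num)
  have hU1 : ContDiff ℝ 1 (deriv U) := myContDiffDeriv hU
  have hU'd : Differentiable ℝ (deriv U) := hU1.differentiable (by norm_num)
  -- small derivative points beyond any T
  have hclaim : ∀ ε > (0:ℝ), ∀ T : ℝ, ∃ t, T ≤ t ∧ |deriv U t| < ε := by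
    by_contra hcon
    push_neg at hcon
    obtain ⟨ε, hε, T, hT⟩ := hcon
    rcases hsign with hs | hs
    · -- deriv U ≤ -ε on [T, ∞): U goes to -∞
      have hkey := (convex_Ici T).image_sub_le_mul_sub_of_deriv_le
        (hUd.continuous.continuousOn) (hUd.differentiableOn) (C := -ε)
        (fun x hx => by
          have hx' : T ≤ x := le_of_lt (by simpa [interior_Ici] using hx)
          have h1 := hT x hx'
          have h2 := hs x
          rw [abs_of_nonpos h2] at h1; linarith)
        T Set.self_mem_Ici (T + U T / ε)
        (by
          have : 0 ≤ U T / ε := div_nonneg (hpos T).le hε.le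
          simp only [Set.mem_Ici]; linarith)
        (by
          have : 0 ≤ U T / ε := div_nonneg (hpos T).le hε.le
          linarith)
      have : U (T + U T / ε) ≤ 0 := by
        have hne : ε ≠ 0 := ne_of_gt hε
        have harg : -ε * (T + U T / ε - T) = -U T := by field_simp; ring
        nlinarith [hkey]
      exact absurd this (not_le.mpr (hpos _))
    · -- deriv U ≥ ε on [T, ∞): U goes to +∞, contradicting convergence
      obtain ⟨T', hT'⟩ := eventually_atTop.mp (hL.eventually (gt_mem_nhds (lt_add_one L)))
      set y := max (max T T') (T + (L + 1 - U T) / ε) with hy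
      have hyT : T ≤ y := le_trans (le_max_left T T') (le_max_left _ _)
      have hkey := (convex_Ici T).mul_sub_le_image_sub_of_le_deriv
        (hUd.continuous.continuousOn) (hUd.differentiableOn) (C := ε)
        (fun x hx => by
          have hx' : T ≤ x := le_of_lt (by simpa [interior_Ici] using hx)
          have h1 := hT x hx'
          rw [abs_of_nonneg (hs x)] at h1; exact h1)
        T Set.self_mem_Ici y hyT hyT
      have h2 : ε * ((L + 1 - U T) / ε) ≤ ε * (y - T) := by
        apply mul_le_mul_of_nonneg_left _ hε.le
        have : T + (L + 1 - U T) / ε ≤ y := le_max_right _ _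
        linarith
      have h3 : ε * ((L + 1 - U T) / ε) = L + 1 - U T := by field_simp
      have h4 : U y < L + 1 := hT' y (le_trans (le_max_right T T') (le_max_left _ _))
      linarith
  -- the sequence
  have hseq : ∀ n : ℕ, ∃ t, (n : ℝ) ≤ t ∧ |deriv U t| < 1 / (n + 1) :=
    fun n => hclaim (1 / (n + 1)) (by positivity) n
  choose s hs1 hs2 using hseq
  have hsn : Tendsto s atTop atTop :=
    tendsto_atTop_mono hs1 tendsto_natCast_atTop_atTop
  have hd0 : Tendsto (fun n => deriv U (s n)) atTop (nhds 0) := by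
    exact squeeze_zero_norm
      (fun n => by rw [Real.norm_eq_abs]; exact (hs2 n).le)
      tendsto_one_div_add_atTop_nhds_zero_nat
  have hUs : Tendsto (fun n => U (s n)) atTop (nhds L) := hL.comp hsn
  have hL0 : 0 ≤ L := ge_of_tendsto hL (Eventually.of_forall fun t => (hpos t).le)
  -- limit of U^p and U''
  have hUsp : Tendsto (fun t => U t ^ p) atTop (nhds (L ^ p)) :=
    ((Real.continuousAt_rpow_const L p (Or.inr (by positivity))).tendsto).comp hL
  have hode' : deriv (deriv U) = fun t => (U t - U t ^ p) / c := by
    funext t; rw [eq_div_iff (ne_of_gt hc), mul_comm]; exact hode t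
  have hU''lim : Tendsto (fun t => deriv (deriv U) t) atTop (nhds ((L - L ^ p) / c)) := by
    rw [hode']; exact (hL.sub hUsp).div_const c
  -- equilibrium
  have heqm : L = L ^ p := by
    by_contra hne
    rcases lt_or_gt_of_ne (sub_ne_zero.mpr hne) with hδ | hδ
    · -- L - L^p < 0 : δ := (L - L^p)/c < 0
      set δ := (L - L ^ p) / c with hδdef
      have hδ0 : δ < 0 := div_neg_of_neg_of_pos hδ hc
      obtain ⟨T, hT⟩ := eventually_atTop.mp
        (hU''lim.eventually (gt_mem_nhds (show δ / 2 > δ by linarith)))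
      have hkey := (convex_Ici T).image_sub_le_mul_sub_of_deriv_le
        (hU1.continuous.continuousOn) (hU'd.differentiableOn) (C := δ / 2)
        (fun x hx => (hT x (le_of_lt (by simpa [interior_Ici] using hx))).le)
        T Set.self_mem_Ici
      have hev1 : ∀ᶠ n in atTop, T + 2 / (-δ) * (|deriv U T| + 1) ≤ s n :=
        hsn.eventually_ge_atTop _
      have hev2 : ∀ᶠ n in atTop, |deriv U (s n)| < 1 := by
        have := hd0.eventually (Metric.ball_mem_nhds 0 one_pos)
        simpa [Real.dist_eq] using this
      obtain ⟨n, h1, h2⟩ := (hev1.and hev2).exists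
      have hTs : T ≤ s n := by nlinarith [abs_nonneg (deriv U T), div_pos two_pos (neg_pos.mpr hδ0)]
      have := hkey (s n) hTs hTs
      have hmul : δ / 2 * (s n - T) ≤ δ / 2 * (2 / (-δ) * (|deriv U T| + 1)) := by
        apply mul_le_mul_of_nonpos_left _ (by linarith)
        linarith
      have hδne : δ ≠ 0 := ne_of_lt hδ0
      have hmul2 : δ / 2 * (2 / (-δ) * (|deriv U T| + 1)) = -(|deriv U T| + 1) := by
        field_simp
      nlinarith [le_abs_self (deriv U T), neg_abs_le (deriv U T),
        le_abs_self (deriv U (s n)), neg_abs_le (deriv U (s n))]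
    · -- L - L^p > 0
      set δ := (L - L ^ p) / c with hδdef
      have hδ0 : 0 < δ := div_pos hδ hc
      obtain ⟨T, hT⟩ := eventually_atTop.mp
        (hU''lim.eventually (lt_mem_nhds (show δ / 2 < δ by linarith)))
      have hkey := (convex_Ici T).mul_sub_le_image_sub_of_le_deriv
        (hU1.continuous.continuousOn) (hU'd.differentiableOn) (C := δ / 2)
        (fun x hx => (hT x (le_of_lt (by simpa [interior_Ici] using hx))).le)
        T Set.self_mem_Ici
      have hev1 : ∀ᶠ n in atTop, T + 2 / δ * (|deriv U T| + 1) ≤ s n :=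
        hsn.eventually_ge_atTop _
      have hev2 : ∀ᶠ n in atTop, |deriv U (s n)| < 1 := by
        have := hd0.eventually (Metric.ball_mem_nhds 0 one_pos)
        simpa [Real.dist_eq] using this
      obtain ⟨n, h1, h2⟩ := (hev1.and hev2).exists
      have hTs : T ≤ s n := by nlinarith [abs_nonneg (deriv U T), div_pos two_pos hδ0]
      have := hkey (s n) hTs hTs
      have hmul : δ / 2 * (2 / δ * (|deriv U T| + 1)) ≤ δ / 2 * (s n - T) := by
        apply mul_le_mul_of_nonneg_left _ (by linarith)
        linarith
      have hmul2 : δ / 2 * (2 / δ * (|deriv U T| + 1)) = |deriv U T| + 1 := by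
        field_simp
      nlinarith [le_abs_self (deriv U T), neg_abs_le (deriv U T),
        le_abs_self (deriv U (s n)), neg_abs_le (deriv U (s n))]
  refine ⟨heqm, ?_⟩
  -- energy
  set E : ℝ → ℝ := fun t => c / 2 * (deriv U t) ^ 2 - (U t) ^ 2 / 2 + (U t) ^ (p + 1) / (p + 1)
    with hEdef
  have hE0 : ∀ t, HasDerivAt E 0 t := by
    intro t
    have hA : HasDerivAt (fun t => c / 2 * (deriv U t) ^ 2)
        (c / 2 * ((2 : ℕ) * (deriv U t) ^ (2 - 1) * deriv (deriv U) t)) t :=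
      (((hU'd t).hasDerivAt).pow 2).const_mul (c / 2)
    have hB : HasDerivAt (fun t => (U t) ^ 2 / 2)
        (((2 : ℕ) * (U t) ^ (2 - 1) * deriv U t) / 2) t :=
      (((hUd t).hasDerivAt).pow 2).div_const 2
    have hC : HasDerivAt (fun t => (U t) ^ (p + 1))
        (deriv U t * (p + 1) * (U t) ^ (p + 1 - 1)) t :=
      ((hUd t).hasDerivAt).rpow_const (Or.inl (ne_of_gt (hpos t)))
    have hD := (hA.sub hB).add (hC.div_const (p + 1))
    have hzero : c / 2 * ((2 : ℕ) * (deriv U t) ^ (2 - 1) * deriv (deriv U) t)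
        - ((2 : ℕ) * (U t) ^ (2 - 1) * deriv U t) / 2
        + deriv U t * (p + 1) * (U t) ^ (p + 1 - 1) / (p + 1) = 0 := by
      have h := hode t
      have hexp : p + 1 - 1 = p := by ring
      rw [hexp]
      have hp1 : p + 1 ≠ 0 := by positivity
      field_simp
      linear_combination (2 * deriv U t) * h
    rw [hzero] at hD
    exact hD
  have hEconst : ∀ t, E t = E 0 :=
    fun t => is_const_of_deriv_eq_zero (fun x => (hE0 x).differentiableAt)
      (fun x => (hE0 x).deriv) t 0
  -- limit of energy along s
  have hUsp1 : Tendsto (fun n => (U (s n)) ^ (p + 1)) atTop (nhds (L ^ (p + 1))) :=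
    ((Real.continuousAt_rpow_const L (p + 1) (Or.inr (by positivity))).tendsto).comp hUs
  have hElim : Tendsto (fun n => E (s n)) atTop
      (nhds (c / 2 * 0 ^ 2 - L ^ 2 / 2 + L ^ (p + 1) / (p + 1))) := by
    exact (((hd0.pow 2).const_mul (c / 2)).sub ((hUs.pow 2).div_const 2)).add
      (hUsp1.div_const (p + 1))
  have : E 0 = c / 2 * 0 ^ 2 - L ^ 2 / 2 + L ^ (p + 1) / (p + 1) := by
    apply tendsto_nhds_unique _ hElim
    simp only [hEconst]
    exact tendsto_const_nhds
  rw [hEdef] at this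
  simp only at this
  rw [this]; ring


lemma ODEClassifyAnti (c p : ℝ) (hc : 0 < c) (hp : 1 < p) (U : ℝ → ℝ)
    (hU : ContDiff ℝ 2 U)
    (hode : ∀ t, c * deriv (deriv U) t = U t - U t ^ p)
    (hpos : ∀ t, 0 < U t) (M : ℝ) (hbd : ∀ t, U t ≤ M)
    (hs : ∀ t, deriv U t ≤ 0) : ∀ t, U t = 1 := by
  have hUd : Differentiable ℝ U := hU.differentiable (by norm_num)
  have hanti : Antitone U := antitone_of_deriv_nonpos hUd hs
  have hbb : BddBelow (Set.range U) := ⟨0, by rintro y ⟨t, rfl⟩; exact (hpos t).le⟩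
  have hba : BddAbove (Set.range U) := ⟨M, by rintro y ⟨t, rfl⟩; exact hbd t⟩
  set Lp := ⨅ t, U t with hLpdef
  set Lm := ⨆ t, U t with hLmdef
  have hLp : Tendsto U atTop (nhds Lp) := tendsto_atTop_ciInf hanti hbb
  have hLm : Tendsto U atBot (nhds Lm) := tendsto_atBot_ciSup hanti hba
  obtain ⟨e1, en1⟩ := tailLemma c p hc hp U hU hode hpos (Or.inl hs) Lp hLp
  -- reflected function
  set V : ℝ → ℝ := fun t => U (-t) with hVdef
  have hV : ContDiff ℝ 2 V := hU.comp contDiff_neg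
  have hVd1 : deriv V = fun t => -deriv U (-t) := negDeriv1 hUd
  have hVd2 : deriv (deriv V) = fun t => deriv (deriv U) (-t) := negDeriv2 hU
  have hVode : ∀ t, c * deriv (deriv V) t = V t - V t ^ p := by
    intro t; rw [hVd2]; exact hode (-t)
  have hVpos : ∀ t, 0 < V t := fun t => hpos (-t)
  have hVsign : (∀ t, deriv V t ≤ 0) ∨ (∀ t, 0 ≤ deriv V t) := by
    right; intro t; rw [hVd1]; simp only [neg_nonneg]; exact hs (-t)
  have hVL : Tendsto V atTop (nhds Lm) := hLm.comp tendsto_neg_atTop_atBot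
  obtain ⟨e2, en2⟩ := tailLemma c p hc hp V hV hVode hVpos hVsign Lm hVL
  -- the two energies coincide
  have hV0 : V 0 = U 0 := by simp [hVdef]
  have hVd0 : (deriv V 0) ^ 2 = (deriv U 0) ^ 2 := by rw [hVd1]; simp
  rw [hV0, hVd0] at en2
  have henEq : -(Lp ^ 2 / 2) + Lp ^ (p + 1) / (p + 1)
      = -(Lm ^ 2 / 2) + Lm ^ (p + 1) / (p + 1) := by rw [← en1, ← en2]
  have hLp0 : 0 ≤ Lp := ge_of_tendsto hLp (Eventually.of_forall fun t => (hpos t).le)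
  have hLm0 : 0 ≤ Lm := ge_of_tendsto hLm (Eventually.of_forall fun t => (hpos t).le)
  have hp1 : p + 1 ≠ 0 := by positivity
  have r1 := rootLemma hp hLp0 e1
  have r2 := rootLemma hp hLm0 e2
  have hLpm : Lp = Lm := by
    rcases r1 with h | h <;> rcases r2 with h' | h' <;> rw [h, h']
    · exfalso
      rw [h, h', Real.zero_rpow hp1, Real.one_rpow] at henEq
      field_simp at henEq
      nlinarith
    · exfalso
      rw [h, h', Real.zero_rpow hp1, Real.one_rpow] at henEq
      field_simp at henEq
      nlinarith
  -- sandwich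
  have hconst : ∀ t, U t = Lp := by
    intro t
    have h1 : Lp ≤ U t :=
      le_of_tendsto hLp (eventually_atTop.mpr ⟨t, fun s hs' => hanti hs'⟩)
    have h2 : U t ≤ Lm :=
      ge_of_tendsto hLm (eventually_atBot.mpr ⟨t, fun s hs' => hanti hs'⟩)
    rw [← hLpm] at h2
    linarith
  have hLp1 : Lp = 1 := by
    rcases r1 with h | h
    · exfalso; have := hpos 0; rw [hconst 0, h] at this; exact lt_irrefl 0 this
    · exact h
  intro t; rw [hconst t, hLp1]

lemma ODEClassify (c p : ℝ) (hc : 0 < c) (hp : 1 < p) (U : ℝ → ℝ)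
    (hU : ContDiff ℝ 2 U)
    (hode : ∀ t, c * deriv (deriv U) t = U t - U t ^ p)
    (hpos : ∀ t, 0 < U t) (M : ℝ) (hbd : ∀ t, U t ≤ M)
    (hsign : (∀ t, deriv U t ≤ 0) ∨ (∀ t, 0 ≤ deriv U t)) : ∀ t, U t = 1 := by
  rcases hsign with hs | hs
  · exact ODEClassifyAnti c p hc hp U hU hode hpos M hbd hs
  · have hUd : Differentiable ℝ U := hU.differentiable (by norm_num)
    set V : ℝ → ℝ := fun t => U (-t) with hVdef
    have hV : ContDiff ℝ 2 V := hU.comp contDiff_neg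
    have hVd1 : deriv V = fun t => -deriv U (-t) := negDeriv1 hUd
    have hVd2 : deriv (deriv V) = fun t => deriv (deriv U) (-t) := negDeriv2 hU
    have hVode : ∀ t, c * deriv (deriv V) t = V t - V t ^ p := by
      intro t; rw [hVd2]; exact hode (-t)
    have key := ODEClassifyAnti c p hc hp V hV hVode (fun t => hpos (-t)) M
      (fun t => hbd (-t))
      (fun t => by rw [hVd1]; simp only [neg_nonpos]; exact hs (-t))
    intro t
    have := key (-t)
    simpa [hVdef] using this

theorem stmt10 (c p : ℝ) (hc : 0 < c) (hp : 1 < p)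
    (u : ℝ × ℝ → ℝ) (hC2 : ContDiff ℝ 2 u)
    (hbdd : ∃ M, ∀ x, |u x| ≤ M) (hpos : ∀ x, 0 < u x)
    (heq : ∀ x : ℝ × ℝ,
      -c * (deriv (deriv (fun s => u (s, x.2))) x.1 +
            deriv (deriv (fun s => u (x.1, s))) x.2) + u x - u x ^ p = 0)
    (hmono : ∀ x : ℝ × ℝ, deriv (fun s => u (x.1, s)) x.2 ≤ 0)
    (hgradbdd : ∃ M, ∀ x : ℝ × ℝ, |deriv (fun s => u (x.1, s)) x.2| ≤ M)
    (a : ℝ × ℝ) (ha : ‖a‖ = 1) (U : ℝ → ℝ) (hU : ContDiff ℝ 2 U)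
    (hsym : ∀ x : ℝ × ℝ, u x = U (a.1 * x.1 + a.2 * x.2))
    (ha2 : a.2 ≠ 0) :
    (∀ x, u x = 0) ∨ (∀ x, u x = 1) := by
  right
  have hUd : Differentiable ℝ U := hU.differentiable (by norm_num)
  have hU1 : ContDiff ℝ 1 (deriv U) := myContDiffDeriv hU
  -- slice representations
  have e1 : ∀ x : ℝ × ℝ, (fun s => u (s, x.2)) = fun s => U (a.1 * s + a.2 * x.2) :=
    fun x => funext fun s => hsym (s, x.2)
  have e2 : ∀ x : ℝ × ℝ, (fun s => u (x.1, s)) = fun s => U (a.2 * s + a.1 * x.1) :=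
    fun x => funext fun s => (hsym (x.1, s)).trans (congrArg U (by ring))
  set c' := c * (a.1 ^ 2 + a.2 ^ 2) with hc'def
  have hc' : 0 < c' := by
    have h2 : 0 < a.2 ^ 2 := by positivity
    nlinarith [sq_nonneg a.1]
  -- the point realizing parameter t
  have hxt : ∀ t : ℝ, a.1 * (0:ℝ) + a.2 * (t / a.2) = t := fun t => by field_simp; ring
  have hxt' : ∀ t : ℝ, a.2 * (t / a.2) + a.1 * (0:ℝ) = t := fun t => by field_simp; ring
  -- the ODE
  have hode : ∀ t, c' * deriv (deriv U) t = U t - U t ^ p := by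
    intro t
    have h := heq (0, t / a.2)
    rw [e1 (0, t / a.2), e2 (0, t / a.2)] at h
    simp only at h
    rw [lineDeriv2 hU a.1 (a.2 * (t / a.2)), lineDeriv2 hU a.2 (a.1 * (0:ℝ))] at h
    simp only at h
    rw [hsym (0, t / a.2)] at h
    simp only at h
    rw [hxt t] at h
    rw [show a.2 * (t / a.2) + a.1 * (0:ℝ) = t from hxt' t] at h
    rw [hc'def]
    linear_combination -h
  -- positivity and bound
  have hpos' : ∀ t, 0 < U t := by
    intro t
    have := hpos (0, t / a.2)
    rwa [hsym (0, t / a.2), show a.1 * (0:ℝ) + a.2 * (t / a.2) = t from hxt t] at this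
  obtain ⟨M, hM⟩ := hbdd
  have hbd' : ∀ t, U t ≤ M := by
    intro t
    have := hM (0, t / a.2)
    rw [hsym (0, t / a.2), show a.1 * (0:ℝ) + a.2 * (t / a.2) = t from hxt t] at this
    exact le_trans (le_abs_self _) this
  -- sign
  have hmono' : ∀ t, deriv U t * a.2 ≤ 0 := by
    intro t
    have := hmono (0, t / a.2)
    rw [e2 (0, t / a.2)] at this
    simp only at this
    rw [lineDeriv1 hUd a.2 (a.1 * (0:ℝ))] at this
    have this2 : deriv U (a.2 * (t / a.2) + a.1 * (0:ℝ)) * a.2 ≤ 0 := this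
    rwa [show a.2 * (t / a.2) + a.1 * (0:ℝ) = t from hxt' t] at this2
  have hsign : (∀ t, deriv U t ≤ 0) ∨ (∀ t, 0 ≤ deriv U t) := by
    rcases ha2.lt_or_gt with h | h
    · right; intro t; nlinarith [hmono' t]
    · left; intro t; nlinarith [hmono' t]
  have key := ODEClassify c' p hc' hp U hU hode hpos' M hbd' hsign
  intro x
  rw [hsym x]
  exact key _
end
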